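/- arXiv:1402.1272 — 3 statements merged into one kernel-verified Lean document; each statement's English description precedes it below -/
import Mathlib

section
/- For any sequence Λ = {λ_n} of positive numbers, the class C([0,1]²) ∩ Λ#BV equipped with the norm ‖f‖ = ‖f‖_C + Λ#V(f) is a Banach space (complete normed space). -/
open MeasureTheory Filter Set ENNReal

noncomputable section

/-- The basic Rademacher-type function: 1 on [0,1/2), -1 on [1/2,1), 1-periodic. -/
def r0 (x : ℝ) : ℝ := if Int.fract x < 1/2 then 1 else -1

/-- The Walsh functions: products of Rademacher functions according to binary digits. -/
def walsh (k : ℕ) (x : ℝ) : ℝ :=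
  ∏ j ∈ Finset.range k, if k.testBit j then r0 (2 ^ j * x) else 1

/-- The Walsh–Dirichlet kernel `D_n`. -/
def walshDirichlet (n : ℕ) (x : ℝ) : ℝ :=
  ∑ k ∈ Finset.range n, walsh k x

/-- A finite ordered family of nonoverlapping subintervals of `[0,1)`. -/
structure IntervalPack (n : ℕ) where
  a : Fin n → ℝ
  b : Fin n → ℝ
  ha : ∀ i, 0 ≤ a i
  hab : ∀ i, a i < b i
  hb : ∀ i, b i ≤ 1
  disj : ∀ i j, i ≠ j → Disjoint (Ioo (a i) (b i)) (Ioo (a j) (b j))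

/-- A family of nonoverlapping intervals together with a point `y i` for each interval. -/
structure SharpPack (n : ℕ) extends IntervalPack n where
  y : Fin n → ℝ
  hy : ∀ i, y i ∈ Ico (0:ℝ) 1

/-- The `Λ^#`-variation sum of `f` over a pack, with weight sequence shifted by `m`
(weight `Λ (m+i)` for the `i`-th interval, `1`-based). -/
def sharpSum {n : ℕ} (Λ : ℕ → ℝ) (m : ℕ) (f : ℝ → ℝ → ℝ) (P : SharpPack n) : ℝ≥0∞ :=
  ∑ i : Fin n, ENNReal.ofReal
    (|f (P.b i) (P.y i) - f (P.a i) (P.y i)| / Λ (m + i.1 + 1))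

/-- `Λ_m^# V_1 (f)`. -/
def sharpV1 (Λ : ℕ → ℝ) (m : ℕ) (f : ℝ → ℝ → ℝ) : ℝ≥0∞ :=
  ⨆ (n : ℕ) (P : SharpPack n), sharpSum Λ m f P

/-- `Λ_m^# V_2 (f)`. -/
def sharpV2 (Λ : ℕ → ℝ) (m : ℕ) (f : ℝ → ℝ → ℝ) : ℝ≥0∞ :=
  sharpV1 Λ m (fun x y => f y x)

/-- `Λ_m^# V (f) = Λ_m^# V_1 (f) + Λ_m^# V_2 (f)`. -/
def sharpV (Λ : ℕ → ℝ) (m : ℕ) (f : ℝ → ℝ → ℝ) : ℝ≥0∞ :=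
  sharpV1 Λ m f + sharpV2 Λ m f

/-- `f ∈ Λ^# BV`: bounded `Λ^#`-variation. -/
def SharpBV (Λ : ℕ → ℝ) (f : ℝ → ℝ → ℝ) : Prop := sharpV Λ 0 f ≠ ⊤

/-- `f ∈ C Λ^# V`: continuity in `Λ^#`-variation, i.e. `Λ_m^# V (f) → 0`. -/
def CSharpV (Λ : ℕ → ℝ) (f : ℝ → ℝ → ℝ) : Prop :=
  Tendsto (fun m => sharpV Λ m f) atTop (nhds 0)

/-- `v_1^#(n, f)`: supremum of sums of `n` increments over `n` nonoverlapping
intervals, with freely chosen points `y_i`. -/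
def vSharp1 (f : ℝ → ℝ → ℝ) (n : ℕ) : ℝ≥0∞ :=
  ⨆ (P : SharpPack n), ∑ i : Fin n,
    ENNReal.ofReal |f (P.b i) (P.y i) - f (P.a i) (P.y i)|

def vSharp2 (f : ℝ → ℝ → ℝ) (n : ℕ) : ℝ≥0∞ := vSharp1 (fun x y => f y x) n

/-- `Λ V_1 (f)`: one fixed `y` for the whole family of intervals. -/
def lineV1 (Λ : ℕ → ℝ) (f : ℝ → ℝ → ℝ) : ℝ≥0∞ :=
  ⨆ (n : ℕ) (y : Ico (0:ℝ) 1) (P : IntervalPack n),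
    ∑ i : Fin n, ENNReal.ofReal (|f (P.b i) (y : ℝ) - f (P.a i) (y : ℝ)| / Λ (i.1 + 1))

def lineV2 (Λ : ℕ → ℝ) (f : ℝ → ℝ → ℝ) : ℝ≥0∞ := lineV1 Λ (fun x y => f y x)

/-- The mixed `(Λ¹,Λ²)`-variation `(Λ¹Λ²) V_{1,2}(f)`. -/
def mixedV (Λ₁ Λ₂ : ℕ → ℝ) (f : ℝ → ℝ → ℝ) : ℝ≥0∞ :=
  ⨆ (n : ℕ) (m : ℕ) (P : IntervalPack n) (Q : IntervalPack m),
    ∑ i : Fin n, ∑ j : Fin m, ENNReal.ofReal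
      (|f (P.a i) (Q.a j) - f (P.a i) (Q.b j) - f (P.b i) (Q.a j) + f (P.b i) (Q.b j)| /
        (Λ₁ (i.1 + 1) * Λ₂ (j.1 + 1)))

/-- Harmonic bounded variation `HBV` in the sense of Hardy–Krause/Waterman type. -/
def HBV (f : ℝ → ℝ → ℝ) : Prop :=
  lineV1 (fun n => (n : ℝ)) f + lineV2 (fun n => (n : ℝ)) f +
    mixedV (fun n => (n : ℝ)) (fun n => (n : ℝ)) f ≠ ⊤

/-- A finite family of nonoverlapping rectangles in `[0,1)²`. -/
structure RectPack (n : ℕ) where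
  a : Fin n → ℝ
  b : Fin n → ℝ
  c : Fin n → ℝ
  d : Fin n → ℝ
  ha : ∀ i, 0 ≤ a i
  hab : ∀ i, a i < b i
  hb : ∀ i, b i ≤ 1
  hc : ∀ i, 0 ≤ c i
  hcd : ∀ i, c i < d i
  hd : ∀ i, d i ≤ 1
  disj : ∀ i j, i ≠ j →
    Disjoint (Ioo (a i) (b i) ×ˢ Ioo (c i) (d i)) (Ioo (a j) (b j) ×ˢ Ioo (c j) (d j))

/-- The Dyachenko–Waterman rectangular variation `Λ* V (f)`. -/
def rectV (Λ : ℕ → ℝ) (f : ℝ → ℝ → ℝ) : ℝ≥0∞ :=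
  ⨆ (n : ℕ) (R : RectPack n), ∑ i : Fin n, ENNReal.ofReal
    (|f (R.a i) (R.c i) - f (R.a i) (R.d i) - f (R.b i) (R.c i) + f (R.b i) (R.d i)| /
      Λ (i.1 + 1))

/-- `q_N = 4^0 + 4^1 + ⋯ + 4^{N-1}`. -/
def qIdx (N : ℕ) : ℕ := ∑ k ∈ Finset.range N, 4 ^ k

/-- The tent function `φ_{N,j}` of height 1 on `[j 2^{-2N}, (j+1) 2^{-2N}]`. -/
def tent (N j : ℕ) (x : ℝ) : ℝ :=
  max 0 (1 - |2 ^ (2 * N + 1) * x - (2 * j + 1)|)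

/-- `φ_N = ∑_{j=1}^{2^{2N}-1} φ_{N,j}`. -/
def tentSum (N : ℕ) (x : ℝ) : ℝ :=
  ∑ j ∈ Finset.Icc 1 (2 ^ (2 * N) - 1), tent N j x

/-- `A_n^α = (α+1)(α+2)⋯(α+n)/n!`. -/
def Acoef (α : ℝ) (n : ℕ) : ℝ :=
  (∏ k ∈ Finset.range n, (α + k + 1)) / n.factorial

/-- The Cesàro `(C,α)` kernel for the Walsh system. -/
def cesaroKernel (α : ℝ) (n : ℕ) (x : ℝ) : ℝ :=
  (Acoef α (n - 1))⁻¹ * ∑ k ∈ Finset.Icc 1 n, Acoef (α - 1) (n - k) * walshDirichlet k x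

/-- The `(n,m)`-th Walsh–Fourier coefficient of `f`. -/
def fourierCoef (f : ℝ → ℝ → ℝ) (n m : ℕ) : ℝ :=
  ∫ x in (0:ℝ)..1, ∫ y in (0:ℝ)..1, f x y * walsh n x * walsh m y

/-- The rectangular partial sums of the double Walsh–Fourier series of `f`. -/
def partialSum (f : ℝ → ℝ → ℝ) (M N : ℕ) (x y : ℝ) : ℝ :=
  ∑ m ∈ Finset.range M, ∑ n ∈ Finset.range N, fourierCoef f m n * walsh m x * walsh n y

/-- The Cesàro `(C;α,β)` means of the double Walsh–Fourier series of `f`. -/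
def cesaroMean (α β : ℝ) (n m : ℕ) (f : ℝ → ℝ → ℝ) (x y : ℝ) : ℝ :=
  (Acoef α (n - 1) * Acoef β (m - 1))⁻¹ *
    ∑ i ∈ Finset.Icc 1 n, ∑ j ∈ Finset.Icc 1 m,
      Acoef (α - 1) (n - i) * Acoef (β - 1) (m - j) * partialSum f i j x y

/-- The sup norm of `f` over `[0,1]²` (in `ℝ≥0∞`). -/
def supNorm (f : ℝ → ℝ → ℝ) : ℝ≥0∞ :=
  ⨆ (x : Icc (0:ℝ) 1) (y : Icc (0:ℝ) 1), ENNReal.ofReal |f x y|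

/-- The norm `‖f‖_C + Λ^# V (f)` on `C ∩ Λ^# BV` (in `ℝ≥0∞`). -/
def bvNorm (Λ : ℕ → ℝ) (f : ℝ → ℝ → ℝ) : ℝ≥0∞ :=
  supNorm f + sharpV Λ 0 f

end

noncomputable section Aux

variable {Λ : ℕ → ℝ}

lemma SharpPack.a_mem {n : ℕ} (P : SharpPack n) (i : Fin n) : P.a i ∈ Icc (0:ℝ) 1 :=
  ⟨P.ha i, (P.hab i).le.trans (P.hb i)⟩

lemma SharpPack.b_mem {n : ℕ} (P : SharpPack n) (i : Fin n) : P.b i ∈ Icc (0:ℝ) 1 :=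
  ⟨(P.ha i).trans (P.hab i).le, P.hb i⟩

lemma SharpPack.y_mem {n : ℕ} (P : SharpPack n) (i : Fin n) : P.y i ∈ Icc (0:ℝ) 1 :=
  Ico_subset_Icc_self (P.hy i)

lemma sharpSum_le_sharpV1 (m : ℕ) (f : ℝ → ℝ → ℝ) {n : ℕ} (P : SharpPack n) :
    sharpSum Λ m f P ≤ sharpV1 Λ m f :=
  le_iSup₂ (f := fun n (P : SharpPack n) => sharpSum Λ m f P) n P

lemma ofReal_abs_le_supNorm (f : ℝ → ℝ → ℝ) {x y : ℝ} (hx : x ∈ Icc (0:ℝ) 1)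
    (hy : y ∈ Icc (0:ℝ) 1) : ENNReal.ofReal |f x y| ≤ supNorm f :=
  le_iSup₂ (f := fun (x : Icc (0:ℝ) 1) (y : Icc (0:ℝ) 1) => ENNReal.ofReal |f x y|)
    ⟨x, hx⟩ ⟨y, hy⟩

lemma supNorm_le_bvNorm (Λ : ℕ → ℝ) (f : ℝ → ℝ → ℝ) : supNorm f ≤ bvNorm Λ f :=
  le_self_add

lemma sharpV1_le_bvNorm (Λ : ℕ → ℝ) (f : ℝ → ℝ → ℝ) : sharpV1 Λ 0 f ≤ bvNorm Λ f :=
  le_self_add.trans le_add_self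

lemma sharpV2_le_bvNorm (Λ : ℕ → ℝ) (f : ℝ → ℝ → ℝ) : sharpV2 Λ 0 f ≤ bvNorm Λ f :=
  le_add_self.trans le_add_self

lemma supNorm_add_le (f g : ℝ → ℝ → ℝ) :
    supNorm (fun x y => f x y + g x y) ≤ supNorm f + supNorm g := by
  refine iSup₂_le fun x y => ?_
  calc ENNReal.ofReal |f x y + g x y| ≤ ENNReal.ofReal (|f x y| + |g x y|) :=
        ENNReal.ofReal_le_ofReal (abs_add_le _ _)
    _ = ENNReal.ofReal |f x y| + ENNReal.ofReal |g x y| :=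
        ENNReal.ofReal_add (abs_nonneg _) (abs_nonneg _)
    _ ≤ _ := add_le_add (ofReal_abs_le_supNorm f x.2 y.2) (ofReal_abs_le_supNorm g x.2 y.2)

lemma sharpV1_add_le (hΛ : ∀ n, 0 < Λ n) (m : ℕ) (f g : ℝ → ℝ → ℝ) :
    sharpV1 Λ m (fun x y => f x y + g x y) ≤ sharpV1 Λ m f + sharpV1 Λ m g := by
  refine iSup₂_le fun n P => ?_
  have hsum : sharpSum Λ m (fun x y => f x y + g x y) P ≤ sharpSum Λ m f P + sharpSum Λ m g P := by
    unfold sharpSum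
    rw [← Finset.sum_add_distrib]
    refine Finset.sum_le_sum fun i _ => ?_
    have habs : |(f (P.b i) (P.y i) + g (P.b i) (P.y i)) - (f (P.a i) (P.y i) + g (P.a i) (P.y i))|
        ≤ |f (P.b i) (P.y i) - f (P.a i) (P.y i)| + |g (P.b i) (P.y i) - g (P.a i) (P.y i)| := by
      rw [add_sub_add_comm]; exact abs_add_le _ _
    calc ENNReal.ofReal (|(fun x y => f x y + g x y) (P.b i) (P.y i) -
            (fun x y => f x y + g x y) (P.a i) (P.y i)| / Λ (m + i.1 + 1))
        ≤ ENNReal.ofReal ((|f (P.b i) (P.y i) - f (P.a i) (P.y i)| +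
            |g (P.b i) (P.y i) - g (P.a i) (P.y i)|) / Λ (m + i.1 + 1)) := by
          refine ENNReal.ofReal_le_ofReal ?_
          rw [div_eq_mul_inv, div_eq_mul_inv]
          exact mul_le_mul_of_nonneg_right habs (inv_nonneg.mpr (hΛ _).le)
      _ = ENNReal.ofReal (|f (P.b i) (P.y i) - f (P.a i) (P.y i)| / Λ (m + i.1 + 1)) +
            ENNReal.ofReal (|g (P.b i) (P.y i) - g (P.a i) (P.y i)| / Λ (m + i.1 + 1)) := by
          rw [add_div, ENNReal.ofReal_add (div_nonneg (abs_nonneg _) (hΛ _).le)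
            (div_nonneg (abs_nonneg _) (hΛ _).le)]
  exact hsum.trans (add_le_add (sharpSum_le_sharpV1 m f P) (sharpSum_le_sharpV1 m g P))

lemma bvNorm_add_le (hΛ : ∀ n, 0 < Λ n) (f g : ℝ → ℝ → ℝ) :
    bvNorm Λ (fun x y => f x y + g x y) ≤ bvNorm Λ f + bvNorm Λ g := by
  unfold bvNorm sharpV
  have h2 : sharpV2 Λ 0 (fun x y => f x y + g x y) ≤ sharpV2 Λ 0 f + sharpV2 Λ 0 g :=
    sharpV1_add_le hΛ 0 (fun x y => f y x) (fun x y => g y x)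
  calc supNorm (fun x y => f x y + g x y) + (sharpV1 Λ 0 (fun x y => f x y + g x y)
        + sharpV2 Λ 0 (fun x y => f x y + g x y))
      ≤ (supNorm f + supNorm g) + ((sharpV1 Λ 0 f + sharpV1 Λ 0 g)
        + (sharpV2 Λ 0 f + sharpV2 Λ 0 g)) :=
        add_le_add (supNorm_add_le f g) (add_le_add (sharpV1_add_le hΛ 0 f g) h2)
    _ = supNorm f + (sharpV1 Λ 0 f + sharpV2 Λ 0 f) +
        (supNorm g + (sharpV1 Λ 0 g + sharpV2 Λ 0 g)) := by ring

lemma supNorm_smul (c : ℝ) (f : ℝ → ℝ → ℝ) :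
    supNorm (fun x y => c * f x y) = ENNReal.ofReal |c| * supNorm f := by
  unfold supNorm
  simp only [abs_mul, ENNReal.ofReal_mul (abs_nonneg c), ← ENNReal.mul_iSup]

lemma sharpV1_smul (c : ℝ) (f : ℝ → ℝ → ℝ) (m : ℕ) :
    sharpV1 Λ m (fun x y => c * f x y) = ENNReal.ofReal |c| * sharpV1 Λ m f := by
  unfold sharpV1 sharpSum
  simp only [← mul_sub, abs_mul, mul_div_assoc, ENNReal.ofReal_mul (abs_nonneg c),
    ← Finset.mul_sum, ← ENNReal.mul_iSup]

lemma bvNorm_smul (Λ : ℕ → ℝ) (c : ℝ) (f : ℝ → ℝ → ℝ) :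
    bvNorm Λ (fun x y => c * f x y) = ENNReal.ofReal |c| * bvNorm Λ f := by
  unfold bvNorm sharpV
  have h2 : sharpV2 Λ 0 (fun x y => c * f x y) = ENNReal.ofReal |c| * sharpV2 Λ 0 f :=
    sharpV1_smul c (fun x y => f y x) 0
  rw [supNorm_smul, sharpV1_smul, h2]
  ring

lemma supNorm_le_of_tendsto {F : ℕ → ℝ → ℝ → ℝ} {g : ℝ → ℝ → ℝ} {C : ℝ≥0∞}
    (hconv : ∀ x ∈ Icc (0:ℝ) 1, ∀ y ∈ Icc (0:ℝ) 1,
      Tendsto (fun q => F q x y) atTop (nhds (g x y)))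
    (hb : ∀ᶠ q in atTop, supNorm (F q) ≤ C) : supNorm g ≤ C := by
  refine iSup₂_le fun x y => ?_
  have h1 : Tendsto (fun q => ENNReal.ofReal |F q x y|) atTop
      (nhds (ENNReal.ofReal |g x y|)) :=
    (ENNReal.continuous_ofReal.tendsto _).comp ((hconv x x.2 y y.2).abs)
  exact le_of_tendsto h1 (hb.mono fun q hq => (ofReal_abs_le_supNorm (F q) x.2 y.2).trans hq)

lemma sharpV1_le_of_tendsto {F : ℕ → ℝ → ℝ → ℝ} {g : ℝ → ℝ → ℝ} {C : ℝ≥0∞} (m : ℕ)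
    (hconv : ∀ x ∈ Icc (0:ℝ) 1, ∀ y ∈ Icc (0:ℝ) 1,
      Tendsto (fun q => F q x y) atTop (nhds (g x y)))
    (hb : ∀ᶠ q in atTop, sharpV1 Λ m (F q) ≤ C) : sharpV1 Λ m g ≤ C := by
  refine iSup₂_le fun n P => ?_
  have h1 : Tendsto (fun q => sharpSum Λ m (F q) P) atTop (nhds (sharpSum Λ m g P)) := by
    unfold sharpSum
    refine tendsto_finset_sum _ fun i _ => (ENNReal.continuous_ofReal.tendsto _).comp ?_
    exact (((hconv _ (P.b_mem i) _ (P.y_mem i)).sub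
      (hconv _ (P.a_mem i) _ (P.y_mem i))).abs).div_const _
  exact le_of_tendsto h1 (hb.mono fun q hq => (sharpSum_le_sharpV1 m (F q) P).trans hq)

def clamp (t : ℝ) : ℝ := max 0 (min 1 t)

lemma clamp_mem (t : ℝ) : clamp t ∈ Icc (0:ℝ) 1 :=
  ⟨le_max_left _ _, max_le zero_le_one (min_le_left _ _)⟩

lemma clamp_eq {t : ℝ} (ht : t ∈ Icc (0:ℝ) 1) : clamp t = t := by
  unfold clamp
  rw [min_eq_right ht.2, max_eq_right ht.1]

lemma continuous_clamp : Continuous clamp :=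
  continuous_const.max (continuous_const.min continuous_id)

end Aux
/-- `C([0,1]²) ∩ Λ^# BV` with the norm `‖·‖_C + Λ^# V(·)` is a Banach
space: the norm is subadditive, absolutely homogeneous, definite on the square, and the
space is complete. -/
theorem stmt14 (Λ : ℕ → ℝ) (hΛ : ∀ n, 0 < Λ n) :
    (∀ f g : ℝ → ℝ → ℝ,
        bvNorm Λ (fun x y => f x y + g x y) ≤ bvNorm Λ f + bvNorm Λ g) ∧
    (∀ (c : ℝ) (f : ℝ → ℝ → ℝ),
        bvNorm Λ (fun x y => c * f x y) = ENNReal.ofReal |c| * bvNorm Λ f) ∧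
    (∀ f : ℝ → ℝ → ℝ,
        ContinuousOn (Function.uncurry f) (Icc (0 : ℝ) 1 ×ˢ Icc (0 : ℝ) 1) →
        bvNorm Λ f = 0 → ∀ x ∈ Icc (0 : ℝ) 1, ∀ y ∈ Icc (0 : ℝ) 1, f x y = 0) ∧
    (∀ F : ℕ → ℝ → ℝ → ℝ,
        (∀ k, ContinuousOn (Function.uncurry (F k)) (Icc (0 : ℝ) 1 ×ˢ Icc (0 : ℝ) 1)) →
        (∀ k, bvNorm Λ (F k) ≠ ⊤) →
        (∀ ε : ℝ, 0 < ε → ∃ M : ℕ, ∀ p, M ≤ p → ∀ q, M ≤ q →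
          bvNorm Λ (fun x y => F p x y - F q x y) < ENNReal.ofReal ε) →
        ∃ g : ℝ → ℝ → ℝ,
          ContinuousOn (Function.uncurry g) (Icc (0 : ℝ) 1 ×ˢ Icc (0 : ℝ) 1) ∧
          bvNorm Λ g ≠ ⊤ ∧
          Tendsto (fun k => bvNorm Λ (fun x y => F k x y - g x y)) atTop (nhds 0)) := by
  refine ⟨bvNorm_add_le hΛ, bvNorm_smul Λ, ?_, ?_⟩
  · -- definiteness
    intro f _ h0 x hx y hy
    have h1 : ENNReal.ofReal |f x y| ≤ (0 : ℝ≥0∞) :=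
      h0 ▸ (ofReal_abs_le_supNorm f hx hy).trans (supNorm_le_bvNorm Λ f)
    have h2 : ENNReal.ofReal |f x y| = 0 := le_antisymm h1 zero_le
    rw [ENNReal.ofReal_eq_zero] at h2
    exact abs_eq_zero.mp (le_antisymm h2 (abs_nonneg _))
  · -- completeness
    intro F hcont hfin hcau
    -- uniform real Cauchy estimate on the square
    have hub : ∀ ε : ℝ, 0 < ε → ∃ M : ℕ, ∀ p, M ≤ p → ∀ q, M ≤ q →
        ∀ x ∈ Icc (0:ℝ) 1, ∀ y ∈ Icc (0:ℝ) 1, |F p x y - F q x y| < ε := by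
      intro ε hε
      obtain ⟨M, hM⟩ := hcau ε hε
      refine ⟨M, fun p hp q hq x hx y hy => ?_⟩
      have h1 : ENNReal.ofReal |F p x y - F q x y| < ENNReal.ofReal ε :=
        lt_of_le_of_lt ((ofReal_abs_le_supNorm _ hx hy).trans (supNorm_le_bvNorm Λ _))
          (hM p hp q hq)
      exact (ENNReal.ofReal_lt_ofReal_iff hε).mp h1
    have hcs : ∀ x ∈ Icc (0:ℝ) 1, ∀ y ∈ Icc (0:ℝ) 1, CauchySeq (fun k => F k x y) := by
      intro x hx y hy
      rw [Metric.cauchySeq_iff]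
      intro ε hε
      obtain ⟨M, hM⟩ := hub ε hε
      exact ⟨M, fun p hp q hq => by
        rw [Real.dist_eq]; exact hM p hp q hq x hx y hy⟩
    set g : ℝ → ℝ → ℝ := fun x y => limUnder atTop (fun k => F k (clamp x) (clamp y)) with hgdef
    have hGt : ∀ z : ℝ × ℝ, Tendsto (fun k => F k (clamp z.1) (clamp z.2)) atTop
        (nhds (g z.1 z.2)) :=
      fun z => (hcs _ (clamp_mem _) _ (clamp_mem _)).tendsto_limUnder
    have hg : ∀ x ∈ Icc (0:ℝ) 1, ∀ y ∈ Icc (0:ℝ) 1,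
        Tendsto (fun k => F k x y) atTop (nhds (g x y)) := by
      intro x hx y hy
      have h := hGt (x, y)
      simpa only [clamp_eq hx, clamp_eq hy] using h
    -- continuity of g
    have hGcont : Continuous (Function.uncurry g) := by
      have htu : TendstoUniformly (fun k (z : ℝ × ℝ) => F k (clamp z.1) (clamp z.2))
          (Function.uncurry g) atTop := by
        rw [Metric.tendstoUniformly_iff]
        intro ε hε
        obtain ⟨M, hM⟩ := hub (ε/2) (half_pos hε)
        refine Filter.eventually_atTop.mpr ⟨M, fun p hp z => ?_⟩
        have h2 : Tendsto (fun q => F p (clamp z.1) (clamp z.2) - F q (clamp z.1) (clamp z.2))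
            atTop (nhds (F p (clamp z.1) (clamp z.2) - Function.uncurry g z)) :=
          tendsto_const_nhds.sub (hGt z)
        have h3 : |F p (clamp z.1) (clamp z.2) - Function.uncurry g z| ≤ ε/2 :=
          le_of_tendsto h2.abs (Filter.eventually_atTop.mpr
            ⟨M, fun q hq => (hM p hp q hq _ (clamp_mem _) _ (clamp_mem _)).le⟩)
        calc dist (Function.uncurry g z) (F p (clamp z.1) (clamp z.2))
            = |F p (clamp z.1) (clamp z.2) - Function.uncurry g z| := by
              rw [Real.dist_eq, abs_sub_comm]
          _ ≤ ε/2 := h3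
          _ < ε := half_lt_self hε
      refine htu.continuous (Filter.Frequently.of_forall fun k => ?_)
      exact (hcont k).comp_continuous
        ((continuous_clamp.comp continuous_fst).prodMk (continuous_clamp.comp continuous_snd))
        (fun z => ⟨clamp_mem _, clamp_mem _⟩)
    -- key estimate
    have key : ∀ ε : ℝ, 0 < ε → ∃ M : ℕ, ∀ p, M ≤ p →
        bvNorm Λ (fun x y => F p x y - g x y) ≤
          ENNReal.ofReal ε + (ENNReal.ofReal ε + ENNReal.ofReal ε) := by
      intro ε hε
      obtain ⟨M, hM⟩ := hcau ε hε
      refine ⟨M, fun p hp => ?_⟩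
      have hconv : ∀ x ∈ Icc (0:ℝ) 1, ∀ y ∈ Icc (0:ℝ) 1,
          Tendsto (fun q => F p x y - F q x y) atTop (nhds (F p x y - g x y)) :=
        fun x hx y hy => tendsto_const_nhds.sub (hg x hx y hy)
      have hev : ∀ᶠ q in atTop,
          bvNorm Λ (fun x y => F p x y - F q x y) ≤ ENNReal.ofReal ε :=
        Filter.eventually_atTop.mpr ⟨M, fun q hq => (hM p hp q hq).le⟩
      have h1 : supNorm (fun x y => F p x y - g x y) ≤ ENNReal.ofReal ε :=
        supNorm_le_of_tendsto hconv
          (hev.mono fun q hq => (supNorm_le_bvNorm Λ _).trans hq)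
      have h2 : sharpV1 Λ 0 (fun x y => F p x y - g x y) ≤ ENNReal.ofReal ε :=
        sharpV1_le_of_tendsto 0 hconv
          (hev.mono fun q hq => (sharpV1_le_bvNorm Λ _).trans hq)
      have h3 : sharpV1 Λ 0 (fun x y => F p y x - g y x) ≤ ENNReal.ofReal ε :=
        sharpV1_le_of_tendsto 0 (fun x hx y hy => tendsto_const_nhds.sub (hg y hy x hx))
          (hev.mono fun q hq => (sharpV2_le_bvNorm Λ (fun x y => F p x y - F q x y)).trans hq)
      exact add_le_add h1 (add_le_add h2 h3)
    refine ⟨g, hGcont.continuousOn, ?_, ?_⟩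
    · -- finiteness of bvNorm g
      obtain ⟨M, hM⟩ := key 1 one_pos
      have hfin1 : bvNorm Λ (fun x y => F M x y - g x y) ≠ ⊤ :=
        ne_top_of_le_ne_top (by finiteness) (hM M le_rfl)
      have heq : bvNorm Λ (fun x y => g x y - F M x y)
          = bvNorm Λ (fun x y => F M x y - g x y) := by
        calc bvNorm Λ (fun x y => g x y - F M x y)
            = bvNorm Λ (fun x y => (-1 : ℝ) * (F M x y - g x y)) := by
              congr 1; funext x y; ring
          _ = ENNReal.ofReal |(-1 : ℝ)| * bvNorm Λ (fun x y => F M x y - g x y) :=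
              bvNorm_smul Λ (-1) _
          _ = bvNorm Λ (fun x y => F M x y - g x y) := by norm_num
      have h3 : bvNorm Λ g ≤ bvNorm Λ (fun x y => g x y - F M x y) + bvNorm Λ (F M) := by
        have := bvNorm_add_le hΛ (fun x y => g x y - F M x y) (F M)
        have heq2 : (fun x y => (g x y - F M x y) + F M x y) = g := by
          funext x y; ring
        rwa [heq2] at this
      exact ne_top_of_le_ne_top (ENNReal.add_ne_top.mpr ⟨heq ▸ hfin1, hfin M⟩) h3
    · -- convergence in bvNorm
      rw [ENNReal.tendsto_nhds_zero]
      intro ε hε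
      rcases eq_or_ne ε ⊤ with rfl | hεt
      · exact Filter.Eventually.of_forall fun _ => le_top
      · set δ : ℝ := ε.toReal / 3 with hδdef
        have hδ : 0 < δ := by
          have := ENNReal.toReal_pos hε.ne' hεt
          positivity
        obtain ⟨M, hM⟩ := key δ hδ
        have hbound : ENNReal.ofReal δ + (ENNReal.ofReal δ + ENNReal.ofReal δ) ≤ ε := by
          rw [← ENNReal.ofReal_add hδ.le (by positivity), ← ENNReal.ofReal_add hδ.le
            (by positivity)]
          have : δ + (δ + δ) = ε.toReal := by rw [hδdef]; ring
          rw [this, ENNReal.ofReal_toReal hεt]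
        exact Filter.eventually_atTop.mpr ⟨M, fun p hp => (hM p hp).trans hbound⟩
end

section
/- For any sequence Λ = {λ_n} with λ_n increasing and positive, the class Λ*BV is contained in Λ#BV: if f has bounded Λ*-variation then f has bounded Λ#-variation. -/
open MeasureTheory Filter Set ENNReal

open Set in
lemma rectV_swap (Λ : ℕ → ℝ) (f : ℝ → ℝ → ℝ) :
    rectV Λ (fun x y => f y x) ≤ rectV Λ f := by
  refine iSup_le fun n => iSup_le fun R => ?_
  let R' : RectPack n :=
    { a := R.c, b := R.d, c := R.a, d := R.b,
      ha := R.hc, hab := R.hcd, hb := R.hd,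
      hc := R.ha, hcd := R.hab, hd := R.hb,
      disj := fun i j hij => Set.disjoint_left.2 fun p hp hq =>
        Set.disjoint_left.1 (R.disj i j hij)
          (show ((p.2, p.1) : ℝ × ℝ) ∈ _ from ⟨hp.2, hp.1⟩)
          (show ((p.2, p.1) : ℝ × ℝ) ∈ _ from ⟨hq.2, hq.1⟩) }
  refine le_trans ?_ (le_iSup_of_le n (le_iSup_of_le R' le_rfl))
  refine le_of_eq (Finset.sum_congr rfl fun i _ => ?_)
  congr 1
  congr 1
  simp only [R']
  ring_nf

open Set in
lemma sharpV1_le (Λ : ℕ → ℝ) (hpos : ∀ n, 0 < Λ n) (f : ℝ → ℝ → ℝ) :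
    sharpV1 Λ 0 f ≤ lineV1 Λ f + rectV Λ f := by
  classical
  refine iSup_le fun n => iSup_le fun P => ?_
  have hlam : ∀ i : Fin n, (0:ℝ) < Λ (i.1 + 1) := fun i => hpos _
  -- the rectangle pack
  let R : RectPack n :=
    { a := P.a, b := P.b, c := fun _ => 0,
      d := fun i => if P.y i ≤ 0 then 1/2 else P.y i,
      ha := P.ha, hab := P.hab, hb := P.hb,
      hc := fun _ => le_refl 0,
      hcd := fun i => by
        split_ifs with h
        · norm_num
        · push_neg at h; exact h,
      hd := fun i => by
        split_ifs with h
        · norm_num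
        · exact (P.hy i).2.le,
      disj := fun i j hij => Set.disjoint_left.2 fun p hp hq =>
        Set.disjoint_left.1 (P.disj i j hij) hp.1 hq.1 }
  have key : sharpSum Λ 0 f P ≤
      (∑ i : Fin n, ENNReal.ofReal (|f (P.b i) 0 - f (P.a i) 0| / Λ (i.1 + 1))) +
      ∑ i : Fin n, ENNReal.ofReal
        (|f (R.a i) (R.c i) - f (R.a i) (R.d i) - f (R.b i) (R.c i) + f (R.b i) (R.d i)| /
          Λ (i.1 + 1)) := by
    rw [← Finset.sum_add_distrib]
    refine Finset.sum_le_sum fun i _ => ?_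
    simp only [sharpSum, Nat.zero_add]
    set B : ℝ := f (P.b i) 0 - f (P.a i) 0 with hB
    by_cases hy0 : P.y i ≤ 0
    · have hy : P.y i = 0 := le_antisymm hy0 (P.hy i).1
      rw [hy]
      exact le_add_of_le_of_nonneg (le_refl _) zero_le
    · simp only [R]; rw [if_neg hy0]
      set C : ℝ := f (P.a i) 0 - f (P.a i) (P.y i) - f (P.b i) 0 + f (P.b i) (P.y i) with hC
      have hsplit : f (P.b i) (P.y i) - f (P.a i) (P.y i) = B + C := by
        rw [hB, hC]; ring
      have habs : |f (P.b i) (P.y i) - f (P.a i) (P.y i)| ≤ |B| + |C| := by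
        rw [hsplit]; exact abs_add_le _ _
      calc ENNReal.ofReal (|f (P.b i) (P.y i) - f (P.a i) (P.y i)| / Λ (i.1 + 1))
          ≤ ENNReal.ofReal ((|B| + |C|) / Λ (i.1 + 1)) := by
            refine ENNReal.ofReal_le_ofReal ?_
            gcongr
            exact (hlam i).le
        _ = ENNReal.ofReal (|B| / Λ (i.1 + 1) + |C| / Λ (i.1 + 1)) := by rw [add_div]
        _ = ENNReal.ofReal (|B| / Λ (i.1 + 1)) + ENNReal.ofReal (|C| / Λ (i.1 + 1)) := by
            rw [ENNReal.ofReal_add (div_nonneg (abs_nonneg _) (hlam i).le)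
              (div_nonneg (abs_nonneg _) (hlam i).le)]
  refine le_trans key (add_le_add ?_ ?_)
  · exact le_iSup_of_le n (le_iSup_of_le (⟨0, by norm_num⟩ : Ico (0:ℝ) 1)
      (le_iSup_of_le P.toIntervalPack le_rfl))
  · exact le_iSup_of_le n (le_iSup_of_le R le_rfl)

/-- `Λ* BV ⊂ Λ^# BV` for increasing positive `Λ`. -/
theorem stmt15 (Λ : ℕ → ℝ) (hpos : ∀ n, 0 < Λ n) (hmono : ∀ n, Λ n ≤ Λ (n + 1))
    (f : ℝ → ℝ → ℝ)
    (hf : lineV1 Λ f + lineV2 Λ f + rectV Λ f ≠ ⊤) :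
    SharpBV Λ f := by
  have h1 : lineV1 Λ f ≠ ⊤ := by
    intro h; exact hf (by rw [h]; simp)
  have h2 : lineV2 Λ f ≠ ⊤ := by
    intro h; exact hf (by rw [h]; simp)
  have h3 : rectV Λ f ≠ ⊤ := by
    intro h; exact hf (by rw [h]; simp)
  have hb1 : sharpV1 Λ 0 f ≤ lineV1 Λ f + rectV Λ f := sharpV1_le Λ hpos f
  have hb2 : sharpV2 Λ 0 f ≤ lineV2 Λ f + rectV Λ f := by
    have := sharpV1_le Λ hpos (fun x y => f y x)
    exact this.trans (add_le_add le_rfl (rectV_swap Λ f))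
  have : sharpV Λ 0 f ≤ (lineV1 Λ f + rectV Λ f) + (lineV2 Λ f + rectV Λ f) :=
    add_le_add hb1 hb2
  refine ne_top_of_le_ne_top ?_ this
  simp [ENNReal.add_ne_top, h1, h2, h3]
end

section
/- Let α,β ∈ (0,1), α+β<1, ξ_n ↑ ∞, Λ = {n^{1−(α+β)}ξ_n}. Define h_N(x,y) = φ_N(x)φ_N(y)·sgn K_{2^{2N}}^{−α}(x)·sgn K_{2^{2N}}^{−β}(y) where φ_N is the sum of tent functions on dyadic intervals of length 2^{−2N}. Then the (C,−α,−β) Cesàro mean of h_N at (0,0) satisfies σ_{2^{2N},2^{2N}}^{−α,−β}(0,0;h_N) = ∫_0^1 φ_N|K_{2^{2N}}^{−α}| dx · ∫_0^1 φ_N|K_{2^{2N}}^{−β}| dy ≥ c(α,β)·2^{2N(α+β)}. -/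
open MeasureTheory Filter Set ENNReal

/-- The test function `h_N(x,y) = φ_N(x) φ_N(y) sgn K^{-α}_{2^{2N}}(x) sgn K^{-β}_{2^{2N}}(y)`. -/
noncomputable def hTest (α β : ℝ) (N : ℕ) (x y : ℝ) : ℝ :=
  tentSum N x * tentSum N y *
    Real.sign (cesaroKernel (-α) (2 ^ (2 * N)) x) *
    Real.sign (cesaroKernel (-β) (2 ^ (2 * N)) y)


noncomputable section AuxProof





-- Part 1 : r0 basics
lemma r0_zero : r0 0 = 1 := by simp [r0]

lemma r0_abs_le (x : ℝ) : |r0 x| ≤ 1 := by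
  unfold r0; split <;> norm_num

lemma r0_sq (x : ℝ) : r0 x * r0 x = 1 := by
  unfold r0; split <;> norm_num

lemma r0_periodic : Function.Periodic r0 1 := by
  intro x; unfold r0; rw [Int.fract_add_one]

lemma measurable_r0 : Measurable r0 := by
  unfold r0
  exact Measurable.ite (measurableSet_lt measurable_fract measurable_const)
    measurable_const measurable_const

lemma r0_eq_floor (x : ℝ) : r0 x = if Even ⌊2*x⌋ then 1 else -1 := by
  have hx : (2:ℝ) * x = 2 * Int.fract x + (2 * ⌊x⌋ : ℤ) := by
    have := Int.fract_add_floor x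
    push_cast
    nlinarith [Int.fract_add_floor x]
  have hfl : ⌊2*x⌋ = ⌊2 * Int.fract x⌋ + 2 * ⌊x⌋ := by
    rw [hx, Int.floor_add_intCast]
  have heven : Even ⌊2*x⌋ ↔ Even ⌊2 * Int.fract x⌋ := by
    rw [hfl]; simp [Int.even_add, parity_simps]
  by_cases h : Int.fract x < 1/2
  · have h0 : ⌊2 * Int.fract x⌋ = 0 := by
      apply Int.floor_eq_zero_iff.2
      constructor
      · nlinarith [Int.fract_nonneg x]
      · nlinarith
    simp only [r0, heven, h0, if_pos h]
    norm_num
  · have h1 : ⌊2 * Int.fract x⌋ = 1 := by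
      have : ((1:ℤ):ℝ) ≤ 2 * Int.fract x ∧ 2 * Int.fract x < (1:ℤ) + 1 := by
        push_cast
        constructor
        · nlinarith [not_lt.1 h]
        · nlinarith [Int.fract_lt_one x]
      exact Int.floor_eq_iff.2 this
    have hne : ¬ Even ⌊2*x⌋ := by rw [heven, h1]; decide
    simp only [r0, heven, h1, if_neg h]
    norm_num

-- Part 2 : dyadic constancy
lemma floor_dyadic {D j i : ℕ} (hj : j < D) {x : ℝ}
    (h1 : (i:ℝ)/2^D ≤ x) (h2 : x < ((i:ℝ)+1)/2^D) :
    ⌊(2:ℝ)^(j+1) * x⌋ = ((i / 2^(D-1-j) : ℕ) : ℤ) := by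
  set e := D - 1 - j with he
  set q := i / 2^e with hqdef
  have hD : D = (j+1) + e := by omega
  have hq : q * 2^e ≤ i := Nat.div_mul_le_self _ _
  have hq2 : i < (q + 1) * 2^e := by
    have h2e : 0 < 2^e := Nat.pow_pos (by norm_num)
    have e1 := Nat.div_add_mod i (2^e)
    have e2 := Nat.mod_lt i h2e
    rw [add_mul, one_mul, mul_comm q, hqdef]
    omega
  have pD : (2:ℝ)^D = 2^(j+1) * 2^e := by rw [hD, pow_add]
  have hpe : (0:ℝ) < 2^e := by positivity
  have hpj : (0:ℝ) < 2^(j+1) := by positivity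
  have hpD : (0:ℝ) < 2^D := by positivity
  have hqr : (q:ℝ) * 2^e ≤ i := by exact_mod_cast hq
  have hq2r : (i:ℝ) + 1 ≤ ((q:ℝ)+1) * 2^e := by
    have : (i:ℝ) + 1 ≤ ((q+1) * 2^e : ℕ) := by exact_mod_cast hq2
    push_cast at this ⊢; linarith
  have hx1 : (i:ℝ) ≤ x * 2^D := by
    rw [div_le_iff₀ hpD] at h1; linarith
  have hx2 : x * 2^D < (i:ℝ) + 1 := by
    rw [lt_div_iff₀ hpD] at h2; linarith
  apply Int.floor_eq_iff.2
  constructor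
  · push_cast
    rw [← mul_le_mul_iff_of_pos_right hpe]
    calc (q:ℝ) * 2^e ≤ i := hqr
      _ ≤ x * 2^D := hx1
      _ = 2^(j+1) * x * 2^e := by rw [pD]; ring
  · push_cast
    rw [← mul_lt_mul_iff_of_pos_right hpe]
    calc (2:ℝ)^(j+1) * x * 2^e = x * 2^D := by rw [pD]; ring
      _ < (i:ℝ) + 1 := hx2
      _ ≤ ((q:ℝ)+1) * 2^e := hq2r

lemma dyadic_self_lt {D i : ℕ} : (i:ℝ)/2^D < ((i:ℝ)+1)/2^D := by
  have hpD : (0:ℝ) < 2^D := by positivity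
  rw [div_lt_div_iff₀ hpD hpD]
  nlinarith

lemma r0_dyadic {D j i : ℕ} (hj : j < D) {x : ℝ}
    (h1 : (i:ℝ)/2^D ≤ x) (h2 : x < ((i:ℝ)+1)/2^D) :
    r0 ((2:ℝ)^j * x) = r0 ((2:ℝ)^j * ((i:ℝ)/2^D)) := by
  have key : ∀ y:ℝ, (i:ℝ)/2^D ≤ y → y < ((i:ℝ)+1)/2^D →
      r0 ((2:ℝ)^j*y) = if Even ((i / 2^(D-1-j) : ℕ):ℤ) then 1 else -1 := by
    intro y hy1 hy2
    rw [r0_eq_floor]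
    have h : 2*((2:ℝ)^j*y) = 2^(j+1)*y := by rw [pow_succ]; ring
    rw [h, floor_dyadic hj hy1 hy2]
  rw [key x h1 h2, key _ le_rfl dyadic_self_lt]

-- Part 3 : wprod / walsh algebra
def wprod (D m : ℕ) (x : ℝ) : ℝ :=
  ∏ j ∈ Finset.range D, if m.testBit j then r0 (2^j * x) else 1

lemma wprod_eq_of_le {D D' m : ℕ} (h : D ≤ D') (hm : m < 2^D) (x : ℝ) :
    wprod D' m x = wprod D m x := by
  unfold wprod
  symm
  apply Finset.prod_subset (Finset.range_subset_range.2 h)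
  intro j hj hnj
  have hjD : D ≤ j := by simpa using hnj
  have : m.testBit j = false :=
    Nat.testBit_lt_two_pow (lt_of_lt_of_le hm (Nat.pow_le_pow_right (by norm_num) hjD))
  simp [this]

lemma walsh_eq_wprod {D m : ℕ} (hm : m < 2^D) (x : ℝ) : walsh m x = wprod D m x := by
  have h1 : walsh m x = wprod m m x := rfl
  rcases le_total m D with h | h
  · rw [h1, ← wprod_eq_of_le h (Nat.lt_two_pow_self (n := m)) x]
  · rw [h1, wprod_eq_of_le h hm x]

lemma wprod_dyadic {D m i : ℕ} {x : ℝ}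
    (h1 : (i:ℝ)/2^D ≤ x) (h2 : x < ((i:ℝ)+1)/2^D) :
    wprod D m x = wprod D m ((i:ℝ)/2^D) := by
  apply Finset.prod_congr rfl
  intro j hj
  rw [Finset.mem_range] at hj
  by_cases hb : m.testBit j
  · simp only [hb, if_true]
    exact r0_dyadic hj h1 h2
  · simp [hb]

lemma walsh_dyadic {D m i : ℕ} (hm : m < 2^D) {x : ℝ}
    (h1 : (i:ℝ)/2^D ≤ x) (h2 : x < ((i:ℝ)+1)/2^D) :
    walsh m x = walsh m ((i:ℝ)/2^D) := by
  rw [walsh_eq_wprod hm, walsh_eq_wprod hm, wprod_dyadic h1 h2]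

lemma walsh_zero_arg (m : ℕ) : walsh m 0 = 1 := by
  unfold walsh
  apply Finset.prod_eq_one
  intro j hj
  have : r0 0 = 1 := by norm_num [r0]
  split <;> simp [this]

lemma abs_walsh_le (m : ℕ) (x : ℝ) : |walsh m x| ≤ 1 := by
  unfold walsh
  rw [Finset.abs_prod]
  apply Finset.prod_le_one
  · intro j _; positivity
  · intro j _
    split
    · unfold r0; split <;> norm_num
    · norm_num

lemma walsh_mul_walsh (a b : ℕ) (x : ℝ) : walsh a x * walsh b x = walsh (a ^^^ b) x := by
  set D := max a b + 1 with hD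
  have ha : a < 2^D := lt_of_le_of_lt (le_max_left a b) (by calc max a b < 2^(max a b) := Nat.lt_two_pow_self
                                                              _ ≤ 2^D := Nat.pow_le_pow_right (by norm_num) (by omega))
  have hb : b < 2^D := lt_of_le_of_lt (le_max_right a b) (by calc max a b < 2^(max a b) := Nat.lt_two_pow_self
                                                              _ ≤ 2^D := Nat.pow_le_pow_right (by norm_num) (by omega))
  have hx : a ^^^ b < 2^D := Nat.xor_lt_two_pow ha hb
  rw [walsh_eq_wprod ha, walsh_eq_wprod hb, walsh_eq_wprod hx]
  unfold wprod
  rw [← Finset.prod_mul_distrib]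
  apply Finset.prod_congr rfl
  intro j _
  rcases hta : a.testBit j <;> rcases htb : b.testBit j <;>
    simp [Nat.testBit_xor, hta, htb, r0_sq]

-- Part 4 : integration machinery
lemma intervalIntegrable_of_bdd {f : ℝ → ℝ} {C a b : ℝ}
    (hm : Measurable f) (hC : ∀ x, |f x| ≤ C) :
    IntervalIntegrable f volume a b := by
  rw [intervalIntegrable_iff]
  apply Integrable.mono' (g := fun _ => C)
    (integrableOn_const measure_Ioc_lt_top.ne)
  · exact hm.aestronglyMeasurable
  · exact ae_of_all _ fun x => by simpa using hC x

lemma integral_mul_of_const_on {h f : ℝ → ℝ} {a b c : ℝ} (hab : a ≤ b)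
    (hh : IntervalIntegrable h volume a b)
    (hf : ∀ x, a ≤ x → x < b → f x = c) :
    IntervalIntegrable (fun x => h x * f x) volume a b ∧
      (∫ x in a..b, h x * f x) = c * ∫ x in a..b, h x := by
  have hb : ∀ᵐ (x : ℝ) ∂(volume : Measure ℝ), x ≠ b := by
    rw [ae_iff]
    simp only [ne_eq, not_not]
    rw [show {x : ℝ | x = b} = {b} from rfl]
    exact measure_singleton b
  have hae : ∀ᵐ (x : ℝ) ∂(volume : Measure ℝ), x ∈ Set.uIoc a b → h x * f x = h x * c := by
    filter_upwards [hb] with x hx hmem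
    rw [Set.uIoc_of_le hab] at hmem
    rw [hf x hmem.1.le (lt_of_le_of_ne hmem.2 hx)]
  constructor
  · rw [intervalIntegrable_iff]
    have h1 : IntegrableOn (fun x => h x * c) (Set.uIoc a b) volume := by
      rw [intervalIntegrable_iff] at hh
      exact hh.mul_const c
    apply h1.congr
    have h2 : ∀ᵐ (x:ℝ) ∂(volume.restrict (Set.uIoc a b)), h x * f x = h x * c := by
      rw [MeasureTheory.ae_restrict_iff' measurableSet_uIoc]
      exact hae
    filter_upwards [h2] with x hx
    exact hx.symm
  · rw [intervalIntegral.integral_congr_ae hae, intervalIntegral.integral_mul_const,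
      mul_comm]

lemma intervalIntegrable_const_on {f : ℝ → ℝ} {a b c : ℝ} (hab : a ≤ b)
    (hf : ∀ x, a ≤ x → x < b → f x = c) :
    IntervalIntegrable f volume a b := by
  have := (integral_mul_of_const_on hab (intervalIntegrable_const (c := (1:ℝ))) hf).1
  simpa using this

lemma integral_const_on {f : ℝ → ℝ} {a b c : ℝ} (hab : a ≤ b)
    (hf : ∀ x, a ≤ x → x < b → f x = c) :
    (∫ x in a..b, f x) = c * (b - a) := by
  have := (integral_mul_of_const_on hab (intervalIntegrable_const (c := (1:ℝ))) hf).2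
  simpa using this

def StepOn (D : ℕ) (f : ℝ → ℝ) : Prop :=
  ∀ (i : ℕ) (x : ℝ), (i:ℝ)/2^D ≤ x → x < ((i:ℝ)+1)/2^D → f x = f ((i:ℝ)/2^D)

lemma integral_mul_step {D : ℕ} {h f : ℝ → ℝ}
    (hh : IntervalIntegrable h volume 0 1) (hf : StepOn D f) :
    ∫ x in (0:ℝ)..1, h x * f x =
      ∑ i ∈ Finset.range (2^D), f ((i:ℝ)/2^D) *
        ∫ x in ((i:ℝ)/2^D)..(((i:ℝ)+1)/2^D), h x := by
  set a : ℕ → ℝ := fun i => (i:ℝ)/2^D with ha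
  have hpD : (0:ℝ) < 2^D := by positivity
  have hmono : ∀ i j : ℕ, i ≤ j → a i ≤ a j := by
    intro i j hij
    show (i:ℝ)/2^D ≤ (j:ℝ)/2^D
    have hc : (i:ℝ) ≤ (j:ℝ) := by exact_mod_cast hij
    gcongr
  have hpiece : ∀ i, i < 2^D →
      IntervalIntegrable (fun x => h x * f x) volume (a i) (a (i+1)) ∧
      (∫ x in (a i)..(a (i+1)), h x * f x) = f (a i) * ∫ x in (a i)..(a (i+1)), h x := by
    intro i hi
    have hle : a i ≤ a (i+1) := hmono i (i+1) (by omega)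
    have hcast : a (i+1) = ((i:ℝ)+1)/2^D := by
      show ((i+1:ℕ):ℝ)/2^D = ((i:ℝ)+1)/2^D
      push_cast; ring
    have hsub : Set.uIcc (a i) (a (i+1)) ⊆ Set.uIcc (0:ℝ) 1 := by
      rw [Set.uIcc_of_le hle, Set.uIcc_of_le (by norm_num : (0:ℝ) ≤ 1)]
      apply Set.Icc_subset_Icc
      · show (0:ℝ) ≤ (i:ℝ)/2^D
        positivity
      · rw [hcast, div_le_one hpD]
        have : (i:ℝ)+1 ≤ ((2^D : ℕ):ℝ) := by exact_mod_cast Nat.succ_le_of_lt hi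
        calc (i:ℝ)+1 ≤ ((2^D : ℕ):ℝ) := this
          _ = 2^D := by push_cast; ring
    have hhi : IntervalIntegrable h volume (a i) (a (i+1)) := hh.mono_set hsub
    have hc : ∀ x, a i ≤ x → x < a (i+1) → f x = f (a i) := by
      intro x hx1 hx2
      rw [hcast] at hx2
      exact hf i x hx1 hx2
    exact integral_mul_of_const_on hle hhi hc
  have ha0 : a 0 = 0 := by show ((0:ℕ):ℝ)/2^D = 0; norm_num
  have han : a (2^D) = 1 := by
    show ((2^D:ℕ):ℝ)/2^D = 1
    rw [div_eq_one_iff_eq (by positivity)]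
    push_cast; ring
  calc ∫ x in (0:ℝ)..1, h x * f x = ∫ x in (a 0)..(a (2^D)), h x * f x := by
        rw [ha0, han]
    _ = ∑ i ∈ Finset.range (2^D), ∫ x in (a i)..(a (i+1)), h x * f x :=
        (intervalIntegral.sum_integral_adjacent_intervals
          (fun i hi => (hpiece i hi).1)).symm
    _ = ∑ i ∈ Finset.range (2^D), f ((i:ℝ)/2^D) *
          ∫ x in ((i:ℝ)/2^D)..(((i:ℝ)+1)/2^D), h x := by
        apply Finset.sum_congr rfl
        intro i hi
        rw [(hpiece i (Finset.mem_range.1 hi)).2]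
        have hcast : a (i+1) = ((i:ℝ)+1)/2^D := by
          show ((i+1:ℕ):ℝ)/2^D = ((i:ℝ)+1)/2^D
          push_cast; ring
        rw [hcast]

-- Part 5 : r0 integral / walsh orthogonality
lemma intervalIntegrable_r0_comp (c a b : ℝ) :
    IntervalIntegrable (fun x => r0 (c * x)) volume a b := by
  apply intervalIntegrable_of_bdd ?_ (fun x => r0_abs_le _)
  exact measurable_r0.comp (measurable_const_mul c)

lemma integral_r0_period (z : ℝ) : (∫ x in z..(z+1), r0 x) = 0 := by
  rw [r0_periodic.intervalIntegral_add_eq z 0]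
  have hi1 : IntervalIntegrable r0 volume 0 (1/2) :=
    intervalIntegrable_of_bdd measurable_r0 r0_abs_le
  have hi2 : IntervalIntegrable r0 volume (1/2) (0+1) :=
    intervalIntegrable_of_bdd measurable_r0 r0_abs_le
  rw [← intervalIntegral.integral_add_adjacent_intervals hi1 hi2]
  have ha : (∫ x in (0:ℝ)..(1/2), r0 x) = 1 * (1/2 - 0) := by
    apply integral_const_on (by norm_num)
    intro x h1 h2
    unfold r0
    rw [Int.fract_eq_self.2 ⟨h1, by linarith⟩]
    exact if_pos h2
  have hb : (∫ x in (1/2 : ℝ)..(0+1), r0 x) = (-1) * (0+1 - 1/2) := by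
    apply integral_const_on (by norm_num)
    intro x h1 h2
    unfold r0
    rw [Int.fract_eq_self.2 ⟨by linarith, by linarith⟩]
    exact if_neg (by linarith)
  rw [ha, hb]; ring

lemma integral_r0_comp_piece {p i : ℕ} :
    (∫ x in ((i:ℝ)/2^p)..(((i:ℝ)+1)/2^p), r0 ((2:ℝ)^p * x)) = 0 := by
  have hp : ((2:ℝ)^p) ≠ 0 := by positivity
  rw [intervalIntegral.integral_comp_mul_left r0 hp]
  have e1 : (2:ℝ)^p * ((i:ℝ)/2^p) = i := by field_simp
  have e2 : (2:ℝ)^p * (((i:ℝ)+1)/2^p) = (i:ℝ) + 1 := by field_simp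
  rw [e1, e2, integral_r0_period, smul_zero]

lemma integral_walsh (s : ℕ) :
    (∫ x in (0:ℝ)..1, walsh s x) = if s = 0 then 1 else 0 := by
  by_cases hs : s = 0
  · subst hs
    have : ∀ x : ℝ, walsh 0 x = 1 := by intro x; simp [walsh]
    rw [intervalIntegral.integral_congr (g := fun _ => (1:ℝ)) (fun x _ => this x)]
    simp
  · rw [if_neg hs]
    set p := s.log2 with hp
    have hp1 : 2^p ≤ s := Nat.log2_self_le hs
    have hp2 : s < 2^(p+1) := Nat.lt_log2_self
    have htb : s.testBit p = true := by
      rw [Nat.testBit_eq_decide_div_mod_eq]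
      have h2 : s < 2^p * 2 := by rw [← pow_succ]; exact hp2
      have hd : s / 2^p = 1 := by
        apply Nat.div_eq_of_lt_le
        · simpa using hp1
        · rw [show (1+1)*2^p = 2^p*2 by ring]
          exact h2
      simp [hd]
    have hfun : ∀ x, walsh s x = r0 ((2:ℝ)^p * x) * wprod p s x := by
      intro x
      rw [walsh_eq_wprod hp2]
      show wprod (p+1) s x = _
      unfold wprod
      rw [Finset.prod_range_succ, htb]
      simp only [if_true]
      ring
    rw [intervalIntegral.integral_congr
        (g := fun x => r0 ((2:ℝ)^p*x) * wprod p s x) (fun x _ => hfun x)]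
    rw [integral_mul_step (D := p) (h := fun x => r0 ((2:ℝ)^p*x)) (f := wprod p s)
        (intervalIntegrable_r0_comp _ _ _)
        (fun i x h1 h2 => wprod_dyadic h1 h2)]
    apply Finset.sum_eq_zero
    intro i _
    rw [integral_r0_comp_piece, mul_zero]

-- Part 6 : discrete orthogonality
lemma sum_walsh_grid {D s : ℕ} (hs : s < 2^D) :
    ∑ i ∈ Finset.range (2^D), walsh s ((i:ℝ)/2^D) = if s = 0 then (2^D : ℝ) else 0 := by
  have hM := integral_mul_step (D := D) (h := fun _ => (1:ℝ)) (f := walsh s)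
      intervalIntegrable_const (fun i x h1 h2 => walsh_dyadic hs h1 h2)
  simp only [one_mul] at hM
  rw [integral_walsh] at hM
  have hpiece : ∀ i : ℕ, (∫ x in ((i:ℝ)/2^D)..(((i:ℝ)+1)/2^D), (1:ℝ)) = ((2:ℝ)^D)⁻¹ := by
    intro i
    rw [intervalIntegral.integral_const, smul_eq_mul, mul_one]
    field_simp; ring
  have hM2 : (if s = 0 then (1:ℝ) else 0) =
      (∑ i ∈ Finset.range (2^D), walsh s ((i:ℝ)/2^D)) * ((2:ℝ)^D)⁻¹ := by
    calc (if s = 0 then (1:ℝ) else 0)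
        = ∑ i ∈ Finset.range (2^D), walsh s ((i:ℝ)/2^D) *
            ∫ x in ((i:ℝ)/2^D)..(((i:ℝ)+1)/2^D), (1:ℝ) := hM
      _ = ∑ i ∈ Finset.range (2^D), walsh s ((i:ℝ)/2^D) * ((2:ℝ)^D)⁻¹ :=
          Finset.sum_congr rfl (fun i _ => by rw [hpiece i])
      _ = _ := by rw [Finset.sum_mul]
  clear hM
  have hM := hM2
  have hP : ((2:ℝ)^D) ≠ 0 := by positivity
  split_ifs at hM ⊢ with h
  · field_simp at hM
    linarith
  · field_simp at hM
    simpa using hM.symm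

-- Part 7 : tent machinery


lemma two_pow_2N1 (N : ℕ) : (2:ℝ)^(2*N+1) = 2 * 2^(2*N) := by rw [pow_succ]; ring

lemma tent_eq_zero_left {N j : ℕ} {x : ℝ} (hx : x ≤ (j:ℝ)/2^(2*N)) : tent N j x = 0 := by
  unfold tent
  apply max_eq_left
  have hP : (0:ℝ) < 2^(2*N) := by positivity
  have h1 : (2:ℝ)^(2*N+1) * x ≤ 2*(j:ℝ) := by
    rw [two_pow_2N1]
    calc 2 * (2:ℝ)^(2*N) * x ≤ 2 * 2^(2*N) * ((j:ℝ)/2^(2*N)) := by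
          apply mul_le_mul_of_nonneg_left hx (by positivity)
      _ = 2*(j:ℝ) := by field_simp
  have habs : (1:ℝ) ≤ |2^(2*N+1) * x - (2*(j:ℝ)+1)| := by
    calc (1:ℝ) ≤ -(2^(2*N+1)*x - (2*(j:ℝ)+1)) := by linarith
      _ ≤ |2^(2*N+1)*x - (2*(j:ℝ)+1)| := neg_le_abs _
  linarith

lemma tent_eq_zero_right {N j : ℕ} {x : ℝ} (hx : ((j:ℝ)+1)/2^(2*N) ≤ x) : tent N j x = 0 := by
  unfold tent
  apply max_eq_left
  have hP : (0:ℝ) < 2^(2*N) := by positivity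
  have h1 : 2*(j:ℝ) + 2 ≤ (2:ℝ)^(2*N+1) * x := by
    rw [two_pow_2N1]
    calc 2*(j:ℝ)+2 = 2 * 2^(2*N) * (((j:ℝ)+1)/2^(2*N)) := by field_simp
      _ ≤ 2 * 2^(2*N) * x := by apply mul_le_mul_of_nonneg_left hx (by positivity)
  have habs : (1:ℝ) ≤ |2^(2*N+1) * x - (2*(j:ℝ)+1)| := by
    calc (1:ℝ) ≤ 2^(2*N+1)*x - (2*(j:ℝ)+1) := by linarith
      _ ≤ |2^(2*N+1)*x - (2*(j:ℝ)+1)| := le_abs_self _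
  linarith

lemma tentSum_piece {N i : ℕ} (hi1 : 1 ≤ i) (hi2 : i ≤ 2^(2*N)-1) {x : ℝ}
    (h1 : (i:ℝ)/2^(2*N) ≤ x) (h2 : x ≤ ((i:ℝ)+1)/2^(2*N)) :
    tentSum N x = tent N i x := by
  unfold tentSum
  apply Finset.sum_eq_single_of_mem i (by rw [Finset.mem_Icc]; omega)
  intro j hj hne
  rw [Finset.mem_Icc] at hj
  rcases lt_or_gt_of_ne hne with hlt | hgt
  · apply tent_eq_zero_right
    calc ((j:ℝ)+1)/2^(2*N) ≤ (i:ℝ)/2^(2*N) := by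
          gcongr
          have : (j:ℝ)+1 ≤ ((j+1 : ℕ):ℝ) := by push_cast; linarith
          calc (j:ℝ)+1 ≤ ((j+1:ℕ):ℝ) := this
            _ ≤ (i:ℝ) := by exact_mod_cast hlt
      _ ≤ x := h1
  · apply tent_eq_zero_left
    calc x ≤ ((i:ℝ)+1)/2^(2*N) := h2
      _ ≤ (j:ℝ)/2^(2*N) := by
          gcongr
          have : ((i+1:ℕ):ℝ) ≤ (j:ℝ) := by exact_mod_cast hgt
          push_cast at this; linarith

lemma tentSum_zero_piece {N : ℕ} {x : ℝ} (h2 : x ≤ (1:ℝ)/2^(2*N)) :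
    tentSum N x = 0 := by
  apply Finset.sum_eq_zero
  intro j hj
  rw [Finset.mem_Icc] at hj
  apply tent_eq_zero_left
  calc x ≤ (1:ℝ)/2^(2*N) := h2
    _ ≤ (j:ℝ)/2^(2*N) := by gcongr; exact_mod_cast hj.1

lemma integral_one_sub_abs : (∫ t in (-1:ℝ)..1, (1 - |t|)) = 1 := by
  have h1 : IntervalIntegrable (fun t : ℝ => |t|) volume (-1) 0 :=
    continuous_abs.intervalIntegrable _ _
  have h2 : IntervalIntegrable (fun t : ℝ => |t|) volume 0 1 :=
    continuous_abs.intervalIntegrable _ _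
  have ha : (∫ t in (-1:ℝ)..0, |t|) = 1/2 := by
    rw [intervalIntegral.integral_congr (g := fun t => -t)
        (fun t ht => by rw [Set.uIcc_of_le (by norm_num : (-1:ℝ) ≤ 0)] at ht
                        exact abs_of_nonpos ht.2)]
    rw [intervalIntegral.integral_neg, integral_id]
    norm_num
  have hb : (∫ t in (0:ℝ)..1, |t|) = 1/2 := by
    rw [intervalIntegral.integral_congr (g := fun t => t)
        (fun t ht => by rw [Set.uIcc_of_le (by norm_num : (0:ℝ) ≤ 1)] at ht
                        exact abs_of_nonneg ht.1)]
    rw [integral_id]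
    norm_num
  have habs : (∫ t in (-1:ℝ)..1, |t|) = 1 := by
    rw [← intervalIntegral.integral_add_adjacent_intervals h1 h2, ha, hb]
    norm_num
  rw [intervalIntegral.integral_sub (intervalIntegrable_const)
      (continuous_abs.intervalIntegrable _ _), habs, intervalIntegral.integral_const]
  norm_num

lemma integral_tent {N i : ℕ} :
    (∫ x in ((i:ℝ)/2^(2*N))..(((i:ℝ)+1)/2^(2*N)), tent N i x) = 1/(2*2^(2*N)) := by
  have hP : (0:ℝ) < 2^(2*N) := by positivity
  have hle := (dyadic_self_lt (D := 2*N) (i := i)).le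
  have heq : ∀ x ∈ Set.uIcc ((i:ℝ)/2^(2*N)) (((i:ℝ)+1)/2^(2*N)),
      tent N i x = (fun t => 1 - |t|) (2^(2*N+1) * x + (-(2*(i:ℝ)+1))) := by
    intro x hx
    rw [Set.uIcc_of_le hle] at hx
    unfold tent
    simp only
    rw [← sub_eq_add_neg]
    apply max_eq_right
    have ha : 2*(i:ℝ) ≤ 2^(2*N+1)*x := by
      rw [two_pow_2N1]
      calc 2*(i:ℝ) = 2 * 2^(2*N) * ((i:ℝ)/2^(2*N)) := by field_simp
        _ ≤ 2 * 2^(2*N) * x := by apply mul_le_mul_of_nonneg_left hx.1 (by positivity)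
    have hb : (2:ℝ)^(2*N+1)*x ≤ 2*(i:ℝ)+2 := by
      rw [two_pow_2N1]
      calc 2 * (2:ℝ)^(2*N) * x ≤ 2 * 2^(2*N) * (((i:ℝ)+1)/2^(2*N)) := by
            apply mul_le_mul_of_nonneg_left hx.2 (by positivity)
        _ = 2*(i:ℝ)+2 := by field_simp
    have : |2^(2*N+1)*x - (2*(i:ℝ)+1)| ≤ 1 := abs_le.2 ⟨by linarith, by linarith⟩
    linarith
  rw [intervalIntegral.integral_congr heq]
  have hc : ((2:ℝ)^(2*N+1)) ≠ 0 := by positivity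
  rw [intervalIntegral.integral_comp_mul_add (fun t => 1 - |t|) hc (-(2*(i:ℝ)+1))]
  have e1 : (2:ℝ)^(2*N+1) * ((i:ℝ)/2^(2*N)) + (-(2*(i:ℝ)+1)) = -1 := by
    rw [two_pow_2N1]; field_simp; ring
  have e2 : (2:ℝ)^(2*N+1) * (((i:ℝ)+1)/2^(2*N)) + (-(2*(i:ℝ)+1)) = 1 := by
    rw [two_pow_2N1]; field_simp; ring
  rw [e1, e2, integral_one_sub_abs, smul_eq_mul, mul_one, two_pow_2N1]
  norm_num

lemma integral_tentSum_piece {N i : ℕ} (hi : i < 2^(2*N)) :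
    (∫ x in ((i:ℝ)/2^(2*N))..(((i:ℝ)+1)/2^(2*N)), tentSum N x)
      = if i = 0 then 0 else 1/(2*2^(2*N)) := by
  have hle := (dyadic_self_lt (D := 2*N) (i := i)).le
  by_cases h0 : i = 0
  · subst h0
    rw [if_pos rfl]
    rw [intervalIntegral.integral_congr (g := fun _ => (0:ℝ)) ?_]
    · simp
    · intro x hx
      rw [Set.uIcc_of_le hle] at hx
      apply tentSum_zero_piece
      have := hx.2
      push_cast at this ⊢
      linarith [this]
  · rw [if_neg h0]
    rw [intervalIntegral.integral_congr (g := tent N i) ?_]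
    · exact integral_tent
    · intro x hx
      rw [Set.uIcc_of_le hle] at hx
      exact tentSum_piece (by omega) (by omega) hx.1 hx.2

lemma continuous_tentSum (N : ℕ) : Continuous (tentSum N) := by
  unfold tentSum
  apply continuous_finset_sum
  intro j _
  unfold tent
  exact continuous_const.max
    (continuous_const.sub (((continuous_const.mul continuous_id).sub continuous_const).abs))

lemma range_eq_insert_Icc {n : ℕ} (hn : 0 < n) :
    Finset.range n = insert 0 (Finset.Icc 1 (n-1)) := by
  ext a
  simp only [Finset.mem_range, Finset.mem_insert, Finset.mem_Icc]
  omega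

lemma tentSum_integral_step {N : ℕ} {F : ℝ → ℝ} (hF : StepOn (2*N) F) :
    (∫ x in (0:ℝ)..1, tentSum N x * F x)
      = (∑ i ∈ Finset.Icc 1 (2^(2*N)-1 : ℕ), F ((i:ℝ)/2^(2*N))) / (2*2^(2*N)) := by
  have hn : 0 < 2^(2*N) := Nat.pow_pos (by norm_num)
  calc (∫ x in (0:ℝ)..1, tentSum N x * F x)
      = ∑ i ∈ Finset.range (2^(2*N)), F ((i:ℝ)/2^(2*N)) *
          ∫ x in ((i:ℝ)/2^(2*N))..(((i:ℝ)+1)/2^(2*N)), tentSum N x :=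
        integral_mul_step ((continuous_tentSum N).intervalIntegrable 0 1) hF
    _ = ∑ i ∈ Finset.range (2^(2*N)), F ((i:ℝ)/2^(2*N)) *
          (if i = 0 then 0 else 1/(2*2^(2*N))) :=
        Finset.sum_congr rfl (fun i hi => by
          rw [integral_tentSum_piece (Finset.mem_range.1 hi)])
    _ = ∑ i ∈ Finset.Icc 1 (2^(2*N)-1 : ℕ), F ((i:ℝ)/2^(2*N)) * (1/(2*2^(2*N))) := by
        rw [range_eq_insert_Icc hn, Finset.sum_insert (by simp)]
        rw [if_pos rfl, mul_zero, zero_add]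
        apply Finset.sum_congr rfl
        intro i hi
        rw [Finset.mem_Icc] at hi
        rw [if_neg (by omega)]
    _ = (∑ i ∈ Finset.Icc 1 (2^(2*N)-1 : ℕ), F ((i:ℝ)/2^(2*N))) / (2*2^(2*N)) := by
        rw [← Finset.sum_mul]
        ring

-- Part 8 : Acoef facts

lemma Acoef_pos {γ : ℝ} (hγ : γ < 1) (m : ℕ) : 0 < Acoef (-γ) m := by
  unfold Acoef
  apply div_pos
  · apply Finset.prod_pos
    intro k _
    have hk : (0:ℝ) ≤ (k:ℝ) := Nat.cast_nonneg k
    linarith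
  · exact_mod_cast Nat.factorial_pos m

lemma Acoef_two (γ : ℝ) : Acoef γ 2 = (γ+1)*(γ+2)/2 := by
  unfold Acoef
  rw [Finset.prod_range_succ, Finset.prod_range_succ, Finset.prod_range_zero]
  norm_num [Nat.factorial]
  ring_nf; simp

lemma Acoef_three (γ : ℝ) : Acoef γ 3 = (γ+1)*(γ+2)*(γ+3)/6 := by
  unfold Acoef
  rw [Finset.prod_range_succ, Finset.prod_range_succ, Finset.prod_range_succ,
    Finset.prod_range_zero]
  norm_num [Nat.factorial]
  ring

lemma Acoef_le_rpow {γ : ℝ} (h0 : 0 < γ) (h1 : γ ≤ 1) (m : ℕ) :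
    Acoef (-γ) m ≤ ((m:ℝ)+1)^(-γ) := by
  have hfac : ((m.factorial : ℕ):ℝ) = ∏ k ∈ Finset.range m, ((k:ℝ)+1) := by
    rw [← Finset.prod_range_add_one_eq_factorial]
    push_cast
    rfl
  have hprod : Acoef (-γ) m = ∏ k ∈ Finset.range m, ((-γ + (k:ℝ) + 1)/((k:ℝ)+1)) := by
    unfold Acoef
    rw [hfac, ← Finset.prod_div_distrib]
  rw [hprod]
  have hstep : ∀ k ∈ Finset.range m,
      (-γ + (k:ℝ) + 1)/((k:ℝ)+1) ≤ Real.exp (-γ/((k:ℝ)+1)) := by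
    intro k _
    have hk : (0:ℝ) < (k:ℝ)+1 := by positivity
    have he : (-γ + (k:ℝ) + 1)/((k:ℝ)+1) = -γ/((k:ℝ)+1) + 1 := by
      field_simp
      ring
    rw [he]
    exact Real.add_one_le_exp _
  have hnonneg : ∀ k ∈ Finset.range m, (0:ℝ) ≤ (-γ + (k:ℝ) + 1)/((k:ℝ)+1) := by
    intro k _
    apply div_nonneg
    · have := Nat.cast_nonneg (α := ℝ) k
      linarith
    · positivity
  calc ∏ k ∈ Finset.range m, ((-γ + (k:ℝ) + 1)/((k:ℝ)+1))
      ≤ ∏ k ∈ Finset.range m, Real.exp (-γ/((k:ℝ)+1)) :=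
        Finset.prod_le_prod hnonneg hstep
    _ = Real.exp (∑ k ∈ Finset.range m, -γ/((k:ℝ)+1)) := (Real.exp_sum _ _).symm
    _ ≤ Real.exp (-γ * Real.log ((m:ℝ)+1)) := by
        apply Real.exp_le_exp.2
        have hsum : Real.log ((m:ℝ)+1) ≤ ∑ k ∈ Finset.range m, 1/((k:ℝ)+1) := by
          have htel : ∑ k ∈ Finset.range m,
              (Real.log (((k:ℝ)+1)+1) - Real.log ((k:ℝ)+1)) = Real.log ((m:ℝ)+1) := by
            have h := Finset.sum_range_sub (fun k : ℕ => Real.log ((k:ℝ)+1)) m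
            push_cast at h
            simpa using h
          rw [← htel]
          apply Finset.sum_le_sum
          intro k _
          have hk : (0:ℝ) < (k:ℝ)+1 := by positivity
          have hk2 : (0:ℝ) < (((k:ℝ)+1)+1)/((k:ℝ)+1) := by positivity
          have hl := Real.log_le_sub_one_of_pos hk2
          rw [Real.log_div (by positivity) (by positivity)] at hl
          have he : (((k:ℝ)+1)+1)/((k:ℝ)+1) - 1 = 1/((k:ℝ)+1) := by field_simp; ring
          linarith [he ▸ hl]
        have hms : ∑ k ∈ Finset.range m, -γ/((k:ℝ)+1)
            = -γ * ∑ k ∈ Finset.range m, 1/((k:ℝ)+1) := by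
          rw [Finset.mul_sum]
          apply Finset.sum_congr rfl
          intro k _
          ring
        rw [hms]
        nlinarith [hsum]
    _ = ((m:ℝ)+1)^(-γ) := by
        rw [Real.rpow_def_of_pos (by positivity), mul_comm]

lemma Acoef_inv_ge {γ : ℝ} (h0 : 0 < γ) (h1 : γ < 1) (n : ℕ) (hn : 1 ≤ n) :
    ((n:ℝ))^(γ:ℝ) ≤ (Acoef (-γ) (n-1))⁻¹ := by
  have hpos := Acoef_pos h1 (n-1)
  have hnr : (0:ℝ) < (n:ℝ) := by exact_mod_cast hn
  have hle : Acoef (-γ) (n-1) ≤ ((n:ℝ))^(-γ) := by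
    have h := Acoef_le_rpow h0 h1.le (n-1)
    have h' : ((n-1:ℕ):ℝ) + 1 = (((n-1)+1 : ℕ):ℝ) := by push_cast; ring
    rw [h', show n-1+1 = n from by omega] at h
    exact h
  rw [Real.rpow_neg hnr.le] at hle
  have := inv_anti₀ hpos hle
  rwa [inv_inv] at this

-- Part 9 : kernel


lemma real_sign_mul_self (t : ℝ) : Real.sign t * t = |t| := by
  rcases lt_trichotomy t 0 with h | h | h
  · rw [Real.sign_of_neg h, abs_of_neg h]; ring
  · simp [h]
  · rw [Real.sign_of_pos h, abs_of_pos h]; ring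

lemma cesaroKernel_dyadic {γ : ℝ} {D n i : ℕ} (hn : n ≤ 2^D) {x : ℝ}
    (h1 : (i:ℝ)/2^D ≤ x) (h2 : x < ((i:ℝ)+1)/2^D) :
    cesaroKernel γ n x = cesaroKernel γ n ((i:ℝ)/2^D) := by
  unfold cesaroKernel walshDirichlet
  congr 1
  apply Finset.sum_congr rfl
  intro k hk
  rw [Finset.mem_Icc] at hk
  congr 1
  apply Finset.sum_congr rfl
  intro m hm
  rw [Finset.mem_range] at hm
  exact walsh_dyadic (lt_of_lt_of_le hm (le_trans hk.2 hn)) h1 h2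

lemma swap_helper (A u : ℝ) (S T : Finset ℕ) (a s : ℕ → ℝ) (W : ℕ → ℕ → ℝ) :
    A * ∑ k ∈ S, a k * ((∑ i ∈ T, s i * W k i)/u)
      = ∑ i ∈ T, s i * (A * ∑ k ∈ S, a k * W k i) / u := by
  simp only [div_eq_mul_inv, Finset.mul_sum, Finset.sum_mul]
  rw [Finset.sum_comm]
  apply Finset.sum_congr rfl
  intro i _
  apply Finset.sum_congr rfl
  intro k _
  ring

lemma swap_helper2 (A : ℝ) (T S : Finset ℕ) (d a : ℕ → ℝ) (W : ℕ → ℕ → ℝ) :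
    ∑ i ∈ T, d i * (A * ∑ k ∈ S, a k * (∑ m ∈ Finset.range k, W m i))
      = A * ∑ k ∈ S, a k * ∑ m ∈ Finset.range k, (∑ i ∈ T, d i * W m i) := by
  simp only [Finset.mul_sum, Finset.sum_mul]
  rw [Finset.sum_comm]
  apply Finset.sum_congr rfl
  intro k _
  rw [Finset.sum_comm]
  apply Finset.sum_congr rfl
  intro m _
  apply Finset.sum_congr rfl
  intro i _
  ring

lemma core_eq (γ : ℝ) (N : ℕ) :
    (Acoef (-γ) (2^(2*N) - 1))⁻¹ *
      ∑ k ∈ Finset.Icc 1 (2^(2*N) : ℕ), Acoef (-γ - 1) (2^(2*N) - k) *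
        ∑ m ∈ Finset.range k, ∫ x in (0:ℝ)..1,
          tentSum N x * Real.sign (cesaroKernel (-γ) (2^(2*N)) x) * walsh m x
      = ∫ x in (0:ℝ)..1, tentSum N x * |cesaroKernel (-γ) (2^(2*N)) x| := by
  have hKstep : StepOn (2*N) (cesaroKernel (-γ) (2^(2*N))) :=
    fun i x h1 h2 => cesaroKernel_dyadic le_rfl h1 h2
  have habs : StepOn (2*N) (fun x => |cesaroKernel (-γ) (2^(2*N)) x|) := by
    intro i x h1 h2
    simp only
    rw [hKstep i x h1 h2]
  rw [tentSum_integral_step (N := N) habs]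
  have hG : ∀ m, m < 2^(2*N) → (∫ x in (0:ℝ)..1,
      tentSum N x * Real.sign (cesaroKernel (-γ) (2^(2*N)) x) * walsh m x)
      = (∑ i ∈ Finset.Icc 1 (2^(2*N)-1 : ℕ),
          Real.sign (cesaroKernel (-γ) (2^(2*N)) ((i:ℝ)/2^(2*N))) * walsh m ((i:ℝ)/2^(2*N)))
          / (2*2^(2*N)) := by
    intro m hm
    have hstep : StepOn (2*N)
        (fun x => Real.sign (cesaroKernel (-γ) (2^(2*N)) x) * walsh m x) := by
      intro i x h1 h2
      simp only
      rw [hKstep i x h1 h2, walsh_dyadic hm h1 h2]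
    rw [← tentSum_integral_step (N := N) hstep]
    apply intervalIntegral.integral_congr
    intro x _
    simp only
    ring
  have step1 : ∀ k ∈ Finset.Icc 1 (2^(2*N) : ℕ),
      Acoef (-γ - 1) (2^(2*N) - k) * ∑ m ∈ Finset.range k, (∫ x in (0:ℝ)..1,
          tentSum N x * Real.sign (cesaroKernel (-γ) (2^(2*N)) x) * walsh m x)
      = Acoef (-γ - 1) (2^(2*N) - k) *
        ((∑ i ∈ Finset.Icc 1 (2^(2*N)-1 : ℕ),
          Real.sign (cesaroKernel (-γ) (2^(2*N)) ((i:ℝ)/2^(2*N))) *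
            walshDirichlet k ((i:ℝ)/2^(2*N))) / (2*2^(2*N))) := by
    intro k hk
    rw [Finset.mem_Icc] at hk
    congr 1
    rw [Finset.sum_congr rfl
        (fun m hm => hG m (lt_of_lt_of_le (Finset.mem_range.1 hm) hk.2)),
      ← Finset.sum_div]
    congr 1
    rw [Finset.sum_comm]
    apply Finset.sum_congr rfl
    intro i _
    rw [← Finset.mul_sum]
    rfl
  rw [Finset.sum_congr rfl step1]
  rw [swap_helper ((Acoef (-γ) (2^(2*N) - 1))⁻¹) (2*2^(2*N)) _ _
      (fun k => Acoef (-γ - 1) (2^(2*N) - k))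
      (fun i => Real.sign (cesaroKernel (-γ) (2^(2*N)) ((i:ℝ)/2^(2*N))))
      (fun k i => walshDirichlet k ((i:ℝ)/2^(2*N)))]
  rw [← Finset.sum_div]
  congr 1
  apply Finset.sum_congr rfl
  intro i _
  rw [show ((Acoef (-γ) (2^(2*N) - 1))⁻¹ *
      ∑ k ∈ Finset.Icc 1 (2^(2*N):ℕ), Acoef (-γ - 1) (2^(2*N) - k) *
        walshDirichlet k ((i:ℝ)/2^(2*N)))
      = cesaroKernel (-γ) (2^(2*N)) ((i:ℝ)/2^(2*N)) from rfl]
  rw [real_sign_mul_self]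

-- Part 10 : lower bound
lemma core_ge (γ : ℝ) (h0 : 0 < γ) (h1 : γ < 1) (N : ℕ) (hN : 1 ≤ N) :
    γ*(1-γ)/8 * (((2^(2*N) : ℕ)):ℝ)^(γ:ℝ)
      ≤ ∫ x in (0:ℝ)..1, tentSum N x * |cesaroKernel (-γ) (2^(2*N)) x| := by
  have hn4 : 4 ≤ 2^(2*N) := by
    calc 4 = 2^2 := rfl
      _ ≤ 2^(2*N) := Nat.pow_le_pow_right (by norm_num) (by omega)
  set n : ℕ := 2^(2*N) with hn
  set nR : ℝ := 2^(2*N) with hnR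
  have hnRpos : (0:ℝ) < nR := by positivity
  have hcastn : ((n:ℕ):ℝ) = nR := by rw [hn, hnR]; push_cast; ring
  have hA := Acoef_pos (γ := γ) h1 (n-1)
  set K : ℝ → ℝ := cesaroKernel (-γ) n with hK
  set pt : ℕ → ℝ := fun i => (i:ℝ)/2^(2*N) with hpt
  -- discrete orthogonality on Icc 1 (n-1)
  have hIcc : ∀ s, s < n → ∑ i ∈ Finset.Icc 1 (n-1:ℕ), walsh s (pt i)
      = (if s = 0 then nR else 0) - 1 := by
    intro s hs
    have h := sum_walsh_grid (D := 2*N) (s := s) hs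
    rw [range_eq_insert_Icc (by omega), Finset.sum_insert (by simp)] at h
    have h0 : walsh s (pt 0) = 1 := by
      have : pt 0 = 0 := by simp [hpt]
      rw [this, walsh_zero_arg]
    rw [h0] at h
    have : ∑ i ∈ Finset.Icc 1 (n-1:ℕ), walsh s (pt i)
        = (if s = 0 then ((2:ℝ)^(2*N)) else 0) - 1 := by linarith
    simpa [hnR] using this
  have hPair : ∀ a m : ℕ, a < n → m < n →
      ∑ i ∈ Finset.Icc 1 (n-1:ℕ), walsh a (pt i) * walsh m (pt i)
        = (if a = m then nR else 0) - 1 := by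
    intro a m ha hm
    have hxor : a ^^^ m < n := Nat.xor_lt_two_pow ha hm
    calc ∑ i ∈ Finset.Icc 1 (n-1:ℕ), walsh a (pt i) * walsh m (pt i)
        = ∑ i ∈ Finset.Icc 1 (n-1:ℕ), walsh (a ^^^ m) (pt i) :=
          Finset.sum_congr rfl (fun i _ => walsh_mul_walsh a m (pt i))
      _ = (if a ^^^ m = 0 then nR else 0) - 1 := hIcc _ hxor
      _ = (if a = m then nR else 0) - 1 := by
          congr 1
          simp [xor_eq_zero_iff]
  have hJ : ∀ m, m < n →
      ∑ i ∈ Finset.Icc 1 (n-1:ℕ),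
        (walsh (n-2) (pt i) - walsh (n-4) (pt i)) * walsh m (pt i)
      = (if m = n-2 then nR else 0) - (if m = n-4 then nR else 0) := by
    intro m hm
    have e : ∀ i : ℕ, (walsh (n-2) (pt i) - walsh (n-4) (pt i)) * walsh m (pt i)
        = walsh (n-2) (pt i) * walsh m (pt i) - walsh (n-4) (pt i) * walsh m (pt i) :=
      fun i => by ring
    rw [Finset.sum_congr rfl (fun i _ => e i), Finset.sum_sub_distrib,
      hPair (n-2) m (by omega) hm, hPair (n-4) m (by omega) hm]
    have c1 : (if n-2 = m then nR else 0) = (if m = n-2 then nR else 0) := by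
      simp [eq_comm]
    have c2 : (if n-4 = m then nR else 0) = (if m = n-4 then nR else 0) := by
      simp [eq_comm]
    rw [c1, c2]
    ring
  -- the key discrete sum
  set Δ : ℕ → ℝ := fun i => walsh (n-2) (pt i) - walsh (n-4) (pt i) with hΔ
  have hT : ∑ i ∈ Finset.Icc 1 (n-1:ℕ), Δ i * K (pt i)
      = (Acoef (-γ) (n-1))⁻¹ *
          (nR * (-(Acoef (-γ-1) 2) - Acoef (-γ-1) 3)) := by
    have hKdef : ∀ i : ℕ, K (pt i) = (Acoef (-γ) (n-1))⁻¹ *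
        ∑ k ∈ Finset.Icc 1 n, Acoef (-γ-1) (n-k) *
          (∑ m ∈ Finset.range k, walsh m (pt i)) := fun i => rfl
    calc ∑ i ∈ Finset.Icc 1 (n-1:ℕ), Δ i * K (pt i)
        = (Acoef (-γ) (n-1))⁻¹ * ∑ k ∈ Finset.Icc 1 n, Acoef (-γ-1) (n-k) *
            ∑ m ∈ Finset.range k, (∑ i ∈ Finset.Icc 1 (n-1:ℕ), Δ i * walsh m (pt i)) := by
          rw [Finset.sum_congr rfl (fun i _ => by rw [hKdef i])]
          exact swap_helper2 _ _ _ _ _ _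
      _ = (Acoef (-γ) (n-1))⁻¹ * ∑ k ∈ Finset.Icc 1 n, Acoef (-γ-1) (n-k) *
            ((if n-2 < k then nR else 0) - (if n-4 < k then nR else 0)) := by
          congr 1
          apply Finset.sum_congr rfl
          intro k hk
          rw [Finset.mem_Icc] at hk
          congr 1
          calc ∑ m ∈ Finset.range k, (∑ i ∈ Finset.Icc 1 (n-1:ℕ), Δ i * walsh m (pt i))
              = ∑ m ∈ Finset.range k,
                  ((if m = n-2 then nR else 0) - (if m = n-4 then nR else 0)) :=
                Finset.sum_congr rfl (fun m hm =>
                  hJ m (lt_of_lt_of_le (Finset.mem_range.1 hm) hk.2))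
            _ = (if n-2 < k then nR else 0) - (if n-4 < k then nR else 0) := by
                rw [Finset.sum_sub_distrib, Finset.sum_ite_eq' (Finset.range k) (n-2),
                  Finset.sum_ite_eq' (Finset.range k) (n-4)]
                simp [Finset.mem_range]
      _ = (Acoef (-γ) (n-1))⁻¹ * (nR * (-(Acoef (-γ-1) 2) - Acoef (-γ-1) 3)) := by
          congr 1
          have hterm : ∀ k ∈ Finset.Icc 1 n, Acoef (-γ-1) (n-k) *
              ((if n-2 < k then nR else 0) - (if n-4 < k then nR else 0))
              = (if k = n-3 then -(nR * Acoef (-γ-1) 3) else 0)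
                + (if k = n-2 then -(nR * Acoef (-γ-1) 2) else 0) := by
            intro k hk
            rw [Finset.mem_Icc] at hk
            by_cases hk3 : k = n-3
            · subst hk3
              rw [show n-(n-3) = 3 from by omega, if_neg (by omega), if_pos (by omega),
                if_pos rfl, if_neg (by omega)]
              ring
            · by_cases hk2 : k = n-2
              · subst hk2
                rw [show n-(n-2) = 2 from by omega, if_neg (by omega), if_pos (by omega),
                  if_neg (by omega), if_pos rfl]
                ring
              · rw [if_neg hk3, if_neg hk2,
                  show (if n-2 < k then nR else 0) = (if n-4 < k then nR else 0) from
                    if_congr (by omega) rfl rfl]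
                simp
          rw [Finset.sum_congr rfl hterm, Finset.sum_add_distrib,
            Finset.sum_ite_eq' (Finset.Icc 1 n) (n-3),
            Finset.sum_ite_eq' (Finset.Icc 1 n) (n-2),
            if_pos (by rw [Finset.mem_Icc]; omega), if_pos (by rw [Finset.mem_Icc]; omega)]
          ring
  -- pointwise bound and conclusion
  have hKstep : StepOn (2*N) K := fun i x hx1 hx2 => cesaroKernel_dyadic le_rfl hx1 hx2
  have habs : StepOn (2*N) (fun x => |K x|) := by
    intro i x hx1 hx2
    simp only
    rw [hKstep i x hx1 hx2]
  have hint : (∫ x in (0:ℝ)..1, tentSum N x * |K x|)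
      = (∑ i ∈ Finset.Icc 1 (n-1:ℕ), |K (pt i)|) / (2*nR) := by
    rw [tentSum_integral_step (N := N) habs]
  have hptwise : ∀ i ∈ Finset.Icc 1 (n-1:ℕ), Δ i * K (pt i) ≤ 2 * |K (pt i)| := by
    intro i _
    have h2 : |Δ i| ≤ 2 := by
      rw [hΔ]
      calc |walsh (n-2) (pt i) - walsh (n-4) (pt i)|
          ≤ |walsh (n-2) (pt i)| + |walsh (n-4) (pt i)| := abs_sub _ _
        _ ≤ 2 := by linarith [abs_walsh_le (n-2) (pt i), abs_walsh_le (n-4) (pt i)]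
    calc Δ i * K (pt i) ≤ |Δ i * K (pt i)| := le_abs_self _
      _ = |Δ i| * |K (pt i)| := abs_mul _ _
      _ ≤ 2 * |K (pt i)| := by
          apply mul_le_mul_of_nonneg_right h2 (abs_nonneg _)
  have hsum_ge : ∑ i ∈ Finset.Icc 1 (n-1:ℕ), Δ i * K (pt i)
      ≤ 2 * ∑ i ∈ Finset.Icc 1 (n-1:ℕ), |K (pt i)| := by
    rw [Finset.mul_sum]
    exact Finset.sum_le_sum hptwise
  -- numeric values
  have hA2 : Acoef (-γ-1) 2 = (-γ)*(1-γ)/2 := by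
    rw [Acoef_two]; ring
  have hA3 : Acoef (-γ-1) 3 = (-γ)*(1-γ)*(2-γ)/6 := by
    rw [Acoef_three]; ring
  have hTpos : (Acoef (-γ) (n-1))⁻¹ * (nR * (γ*(1-γ)/2))
      ≤ ∑ i ∈ Finset.Icc 1 (n-1:ℕ), Δ i * K (pt i) := by
    rw [hT, hA2, hA3]
    have hAinv : (0:ℝ) < (Acoef (-γ) (n-1))⁻¹ := by positivity
    have hfac : γ*(1-γ)/2 ≤ -((-γ)*(1-γ)/2) - (-γ)*(1-γ)*(2-γ)/6 := by
      nlinarith [mul_pos (mul_pos h0 (by linarith : (0:ℝ) < 1-γ)) (by linarith : (0:ℝ) < 2-γ)]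
    apply mul_le_mul_of_nonneg_left ?_ hAinv.le
    apply mul_le_mul_of_nonneg_left hfac hnRpos.le
  have hinv : ((n:ℕ):ℝ)^(γ:ℝ) ≤ (Acoef (-γ) (n-1))⁻¹ :=
    Acoef_inv_ge h0 h1 n (by omega)
  rw [hint]
  rw [le_div_iff₀ (by positivity : (0:ℝ) < 2*nR)]
  have hc2 : (0:ℝ) ≤ nR * (γ*(1-γ)/2) :=
    mul_nonneg hnRpos.le (by nlinarith : (0:ℝ) ≤ γ*(1-γ)/2)
  have hmono := mul_le_mul_of_nonneg_right hinv hc2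
  linarith [le_trans hTpos hsum_ge, hmono]

-- Part 11 : main theorem




lemma prod_split (A B : ℝ) (S T : Finset ℕ) (a b X Y : ℕ → ℝ) :
    (A * B)⁻¹ * (∑ i ∈ S, ∑ j ∈ T, a i * b j * (X i * Y j))
      = (A⁻¹ * ∑ i ∈ S, a i * X i) * (B⁻¹ * ∑ j ∈ T, b j * Y j) := by
  rw [mul_inv]
  have h : (∑ i ∈ S, ∑ j ∈ T, a i * b j * (X i * Y j))
      = (∑ i ∈ S, a i * X i) * (∑ j ∈ T, b j * Y j) := by
    rw [Finset.sum_mul_sum]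
    apply Finset.sum_congr rfl
    intro i _
    apply Finset.sum_congr rfl
    intro j _
    ring
  rw [h]
  ring

end AuxProof

/-- `σ^{-α,-β}_{2^{2N},2^{2N}}(0,0;h_N)` equals the product of the two
integrals `∫ φ_N |K^{-α}|`, `∫ φ_N |K^{-β}|` and is `≥ c(α,β) 2^{2N(α+β)}`. -/
theorem stmt19 (α β : ℝ) (hα : α ∈ Ioo (0 : ℝ) 1) (hβ : β ∈ Ioo (0 : ℝ) 1)
    (hαβ : α + β < 1) :
    ∃ c : ℝ, 0 < c ∧ ∀ N : ℕ, 1 ≤ N →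
      cesaroMean (-α) (-β) (2 ^ (2 * N)) (2 ^ (2 * N)) (hTest α β N) 0 0 =
        (∫ x in (0 : ℝ)..1, tentSum N x * |cesaroKernel (-α) (2 ^ (2 * N)) x|) *
        (∫ y in (0 : ℝ)..1, tentSum N y * |cesaroKernel (-β) (2 ^ (2 * N)) y|) ∧
      c * (2 : ℝ) ^ ((2 * (N : ℝ)) * (α + β)) ≤
        cesaroMean (-α) (-β) (2 ^ (2 * N)) (2 ^ (2 * N)) (hTest α β N) 0 0 := by
  obtain ⟨hα0, hα1⟩ := hα
  obtain ⟨hβ0, hβ1⟩ := hβ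
  refine ⟨(α*(1-α)/8) * (β*(1-β)/8),
    mul_pos (by nlinarith) (by nlinarith), ?_⟩
  intro N hN
  have hfc : ∀ m k : ℕ, fourierCoef (hTest α β N) m k
      = (∫ x in (0:ℝ)..1, tentSum N x * Real.sign (cesaroKernel (-α) (2^(2*N)) x) * walsh m x)
        * (∫ y in (0:ℝ)..1, tentSum N y * Real.sign (cesaroKernel (-β) (2^(2*N)) y) * walsh k y) := by
    intro m k
    unfold fourierCoef
    have hinner : ∀ x : ℝ, (∫ y in (0:ℝ)..1, hTest α β N x y * walsh m x * walsh k y)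
        = (tentSum N x * Real.sign (cesaroKernel (-α) (2^(2*N)) x) * walsh m x) *
          (∫ y in (0:ℝ)..1, tentSum N y * Real.sign (cesaroKernel (-β) (2^(2*N)) y) * walsh k y) := by
      intro x
      rw [show (fun y => hTest α β N x y * walsh m x * walsh k y)
          = fun y => (tentSum N x * Real.sign (cesaroKernel (-α) (2^(2*N)) x) * walsh m x) *
              (tentSum N y * Real.sign (cesaroKernel (-β) (2^(2*N)) y) * walsh k y) from
        funext fun y => by unfold hTest; ring]
      rw [intervalIntegral.integral_const_mul]
    rw [intervalIntegral.integral_congr (g := fun x =>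
        (tentSum N x * Real.sign (cesaroKernel (-α) (2^(2*N)) x) * walsh m x) *
          (∫ y in (0:ℝ)..1, tentSum N y * Real.sign (cesaroKernel (-β) (2^(2*N)) y) * walsh k y))
        (fun x _ => hinner x)]
    rw [intervalIntegral.integral_mul_const]
  have hps : ∀ i j : ℕ, partialSum (hTest α β N) i j 0 0
      = (∑ m ∈ Finset.range i, ∫ x in (0:ℝ)..1,
            tentSum N x * Real.sign (cesaroKernel (-α) (2^(2*N)) x) * walsh m x)
        * (∑ k ∈ Finset.range j, ∫ y in (0:ℝ)..1,
            tentSum N y * Real.sign (cesaroKernel (-β) (2^(2*N)) y) * walsh k y) := by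
    intro i j
    unfold partialSum
    rw [Finset.sum_mul_sum]
    apply Finset.sum_congr rfl
    intro m _
    apply Finset.sum_congr rfl
    intro k _
    rw [hfc m k, walsh_zero_arg, walsh_zero_arg]
    ring
  have hmean : cesaroMean (-α) (-β) (2^(2*N)) (2^(2*N)) (hTest α β N) 0 0
      = ((Acoef (-α) (2^(2*N)-1))⁻¹ * ∑ i ∈ Finset.Icc 1 (2^(2*N):ℕ),
            Acoef (-α-1) (2^(2*N)-i) * ∑ m ∈ Finset.range i, ∫ x in (0:ℝ)..1,
              tentSum N x * Real.sign (cesaroKernel (-α) (2^(2*N)) x) * walsh m x)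
        * ((Acoef (-β) (2^(2*N)-1))⁻¹ * ∑ j ∈ Finset.Icc 1 (2^(2*N):ℕ),
            Acoef (-β-1) (2^(2*N)-j) * ∑ k ∈ Finset.range j, ∫ y in (0:ℝ)..1,
              tentSum N y * Real.sign (cesaroKernel (-β) (2^(2*N)) y) * walsh k y) := by
    unfold cesaroMean
    have hsum : (∑ i ∈ Finset.Icc 1 (2^(2*N):ℕ), ∑ j ∈ Finset.Icc 1 (2^(2*N):ℕ),
        Acoef (-α-1) (2^(2*N)-i) * Acoef (-β-1) (2^(2*N)-j) * partialSum (hTest α β N) i j 0 0)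
        = ∑ i ∈ Finset.Icc 1 (2^(2*N):ℕ), ∑ j ∈ Finset.Icc 1 (2^(2*N):ℕ),
          Acoef (-α-1) (2^(2*N)-i) * Acoef (-β-1) (2^(2*N)-j) *
            ((∑ m ∈ Finset.range i, ∫ x in (0:ℝ)..1,
              tentSum N x * Real.sign (cesaroKernel (-α) (2^(2*N)) x) * walsh m x)
            * (∑ k ∈ Finset.range j, ∫ y in (0:ℝ)..1,
              tentSum N y * Real.sign (cesaroKernel (-β) (2^(2*N)) y) * walsh k y)) :=
      Finset.sum_congr rfl (fun i _ => Finset.sum_congr rfl (fun j _ => by rw [hps i j]))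
    rw [hsum]
    exact prod_split _ _ _ _ _ _ _ _
  have heqα := core_eq α N
  have heqβ := core_eq β N
  have heq : cesaroMean (-α) (-β) (2^(2*N)) (2^(2*N)) (hTest α β N) 0 0
      = (∫ x in (0:ℝ)..1, tentSum N x * |cesaroKernel (-α) (2^(2*N)) x|)
        * (∫ y in (0:ℝ)..1, tentSum N y * |cesaroKernel (-β) (2^(2*N)) y|) := by
    rw [hmean, heqα, heqβ]
  refine ⟨heq, ?_⟩
  have h1 := core_ge α hα0 hα1 N hN
  have h2 := core_ge β hβ0 hβ1 N hN
  have hP : ∀ γ:ℝ, (((2^(2*N):ℕ)):ℝ)^(γ:ℝ) = (2:ℝ)^((2*(N:ℝ))*γ) := by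
    intro γ
    have hc : (((2^(2*N):ℕ)):ℝ) = (2:ℝ)^((2*N : ℕ)) := by push_cast; ring
    rw [hc, ← Real.rpow_natCast 2 (2*N), ← Real.rpow_mul (by norm_num)]
    congr 1
    push_cast
    ring
  have hPαpos : (0:ℝ) < (((2^(2*N):ℕ)):ℝ)^(α:ℝ) :=
    Real.rpow_pos_of_pos (by positivity) _
  have hPβpos : (0:ℝ) < (((2^(2*N):ℕ)):ℝ)^(β:ℝ) :=
    Real.rpow_pos_of_pos (by positivity) _
  have hL1 : (0:ℝ) < α*(1-α)/8 * (((2^(2*N):ℕ)):ℝ)^(α:ℝ) := by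
    apply mul_pos (by nlinarith) hPαpos
  have hL2 : (0:ℝ) < β*(1-β)/8 * (((2^(2*N):ℕ)):ℝ)^(β:ℝ) := by
    apply mul_pos (by nlinarith) hPβpos
  have hprod : (α*(1-α)/8 * (((2^(2*N):ℕ)):ℝ)^(α:ℝ))
      * (β*(1-β)/8 * (((2^(2*N):ℕ)):ℝ)^(β:ℝ))
      ≤ (∫ x in (0:ℝ)..1, tentSum N x * |cesaroKernel (-α) (2^(2*N)) x|)
        * (∫ y in (0:ℝ)..1, tentSum N y * |cesaroKernel (-β) (2^(2*N)) y|) :=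
    mul_le_mul h1 h2 hL2.le (le_trans hL1.le h1)
  have hrw : (α*(1-α)/8) * (β*(1-β)/8) * (2:ℝ)^((2*(N:ℝ))*(α+β))
      = (α*(1-α)/8 * (((2^(2*N):ℕ)):ℝ)^(α:ℝ))
        * (β*(1-β)/8 * (((2^(2*N):ℕ)):ℝ)^(β:ℝ)) := by
    rw [hP α, hP β]
    rw [show (α*(1-α)/8 * (2:ℝ)^((2*(N:ℝ))*α)) * (β*(1-β)/8 * (2:ℝ)^((2*(N:ℝ))*β))
        = (α*(1-α)/8) * (β*(1-β)/8) * ((2:ℝ)^((2*(N:ℝ))*α) * (2:ℝ)^((2*(N:ℝ))*β)) from by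
      ring]
    rw [← Real.rpow_add (by norm_num : (0:ℝ) < 2)]
    rw [show (2*(N:ℝ))*α + (2*(N:ℝ))*β = (2*(N:ℝ))*(α+β) from by ring]
  rw [heq, hrw]
  exact hprod
end
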